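/- arXiv:1809.08280 — 5 statements merged into one kernel-verified Lean document; each statement's English description precedes it below -/
import Mathlib

section
/- Let S be an N×N real symmetric positive definite matrix and let E be the N×N diagonal matrix with E_{ii} = ε^{i-1} for some 0 < ε < 1. If λ_1 ≥ λ_2 ≥ ... ≥ λ_N are the eigenvalues of ESE, then for every 1 ≤ m ≤ N−1, λ_{m+1} ≤ (ε^{2m}/(1−ε²)) · max_{1≤j,k≤N} |S_{jk}|. -/
open Matrix Finset RealInnerProductSpace

lemma geom_tail_le {r : ℝ} (h0 : 0 ≤ r) (h1 : r < 1) (m N : ℕ) :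
    ∑ n ∈ Finset.Ico m N, r ^ n ≤ r ^ m / (1 - r) := by
  rcases le_or_gt N m with h | h
  · rw [Finset.Ico_eq_empty (by omega)]
    simp [div_nonneg (pow_nonneg h0 m) (by linarith : (0:ℝ) ≤ 1 - r)]
  · rw [geom_sum_Ico (by linarith : r ≠ 1) h.le]
    have h2 : (r ^ N - r ^ m) / (r - 1) = (r ^ m - r ^ N) / (1 - r) := by
      rw [div_eq_div_iff (by linarith) (by linarith)]; ring
    rw [h2]
    apply div_le_div_of_nonneg_right ?_ (by linarith)
    exact sub_le_self _ (pow_nonneg h0 N)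

lemma quad_upper (N m : ℕ) (hN : 0 < N) (S : Matrix (Fin N) (Fin N) ℝ)
    (ε : ℝ) (hε0 : 0 < ε) (hε1 : ε < 1)
    (u : Fin N → ℝ) (hu : ∀ j : Fin N, (j : ℕ) < m → u j = 0) :
    u ⬝ᵥ (((Matrix.diagonal fun i : Fin N => ε ^ (i : ℕ)) * S *
        (Matrix.diagonal fun i : Fin N => ε ^ (i : ℕ))) *ᵥ u) ≤
      ε ^ (2 * m) / (1 - ε ^ 2) * (⨆ j : Fin N, ⨆ k : Fin N, |S j k|) * (u ⬝ᵥ u) := by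
  haveI : Nonempty (Fin N) := Fin.pos_iff_nonempty.mp hN
  classical
  set M := ⨆ j : Fin N, ⨆ k : Fin N, |S j k| with hMdef
  have hM : ∀ j k, |S j k| ≤ M := fun j k =>
    le_trans (le_ciSup (Set.Finite.bddAbove (Set.finite_range fun k' => |S j k'|)) k)
      (le_ciSup (Set.Finite.bddAbove (Set.finite_range fun j' => ⨆ k' : Fin N, |S j' k'|)) j)
  have hM0 : 0 ≤ M := le_trans (abs_nonneg _) (hM (Classical.arbitrary _) (Classical.arbitrary _))
  set w : Fin N → ℝ := fun j => ε ^ (j : ℕ) * u j with hw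
  have hQ : u ⬝ᵥ (((Matrix.diagonal fun i : Fin N => ε ^ (i : ℕ)) * S *
      (Matrix.diagonal fun i : Fin N => ε ^ (i : ℕ))) *ᵥ u)
      = ∑ j, ∑ k, w j * w k * S j k := by
    rw [dotProduct]
    refine Finset.sum_congr rfl fun j _ => ?_
    rw [Matrix.mulVec, dotProduct, Finset.mul_sum]
    refine Finset.sum_congr rfl fun k _ => ?_
    rw [Matrix.mul_diagonal, Matrix.diagonal_mul]
    simp only [hw]; ring
  set P : ℝ := ∑ j, |w j| with hP
  have hstep : ∑ j, ∑ k, w j * w k * S j k ≤ P * P * M := by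
    calc ∑ j, ∑ k, w j * w k * S j k ≤ ∑ j, ∑ k, |w j| * |w k| * M := by
          refine Finset.sum_le_sum fun j _ => Finset.sum_le_sum fun k _ => ?_
          calc w j * w k * S j k ≤ |w j * w k * S j k| := le_abs_self _
            _ = |w j| * |w k| * |S j k| := by rw [abs_mul, abs_mul]
            _ ≤ |w j| * |w k| * M :=
                mul_le_mul_of_nonneg_left (hM j k) (mul_nonneg (abs_nonneg _) (abs_nonneg _))
      _ = P * P * M := by
          rw [hP, Finset.sum_mul_sum, Finset.sum_mul]
          exact Finset.sum_congr rfl fun j _ => by rw [Finset.sum_mul]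
  set s : Finset (Fin N) := Finset.univ.filter fun j => m ≤ (j : ℕ) with hs
  have hPs : P = ∑ j ∈ s, ε ^ (j : ℕ) * |u j| := by
    rw [hP]
    rw [← Finset.sum_subset (Finset.subset_univ s) (fun j _ hj => ?_)]
    · exact Finset.sum_congr rfl fun j _ => by
        rw [hw, abs_mul, abs_of_nonneg (pow_nonneg hε0.le _)]
    · have hjm : (j : ℕ) < m := by
        by_contra hc; exact hj (Finset.mem_filter.mpr ⟨Finset.mem_univ j, by omega⟩)
      simp [hw, hu j hjm]
  have hCS := Finset.sum_mul_sq_le_sq_mul_sq s (fun j => ε ^ (j : ℕ)) (fun j => |u j|)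
  have h1 : ∑ j ∈ s, (ε ^ (j : ℕ)) ^ 2 ≤ ε ^ (2 * m) / (1 - ε ^ 2) := by
    have he : ∀ j : Fin N, (ε ^ (j : ℕ)) ^ 2 = (ε ^ 2) ^ (j : ℕ) := fun j => by
      rw [← pow_mul, ← pow_mul, mul_comm]
    rw [Finset.sum_congr rfl fun j _ => he j]
    have : ∑ j ∈ s, (ε ^ 2) ^ (j : ℕ) = ∑ n ∈ Finset.Ico m N, (ε ^ 2) ^ n := by
      rw [hs, Finset.sum_filter, Fin.sum_univ_eq_sum_range (fun n => if m ≤ n then (ε ^ 2) ^ n else 0) N,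
        ← Finset.sum_filter]
      congr 1
      ext n; simp [Finset.mem_Ico, Finset.mem_filter]; omega
    rw [this, pow_mul]
    exact geom_tail_le (sq_nonneg ε) (by nlinarith) m N
  have h2 : ∑ j ∈ s, |u j| ^ 2 ≤ u ⬝ᵥ u := by
    rw [dotProduct]
    calc ∑ j ∈ s, |u j| ^ 2 ≤ ∑ j, |u j| ^ 2 :=
          Finset.sum_le_sum_of_subset_of_nonneg (Finset.subset_univ s)
            (fun j _ _ => sq_nonneg _)
      _ = ∑ j, u j * u j := Finset.sum_congr rfl fun j _ => by rw [sq_abs]; ring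
  have hd0 : 0 < 1 - ε ^ 2 := by nlinarith
  have hPP : P * P ≤ ε ^ (2 * m) / (1 - ε ^ 2) * (u ⬝ᵥ u) := by
    have : P * P = P ^ 2 := by ring
    rw [this, hPs]
    refine le_trans hCS ?_
    have hn1 : (0:ℝ) ≤ ∑ j ∈ s, |u j| ^ 2 := Finset.sum_nonneg fun j _ => sq_nonneg _
    exact mul_le_mul h1 h2 hn1 (div_nonneg (pow_nonneg hε0.le _) hd0.le)
  rw [hQ]
  calc ∑ j, ∑ k, w j * w k * S j k ≤ P * P * M := hstep
    _ ≤ ε ^ (2 * m) / (1 - ε ^ 2) * (u ⬝ᵥ u) * M := mul_le_mul_of_nonneg_right hPP hM0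
    _ = ε ^ (2 * m) / (1 - ε ^ 2) * M * (u ⬝ᵥ u) := by ring


/-- **ESE eigenvalue bound.** If `S` is an `N × N` real symmetric positive definite matrix,
`E` is diagonal with `E i i = ε ^ i` (0-indexed, i.e. `ε^(i-1)` 1-indexed) for `0 < ε < 1`,
and `lam` lists the eigenvalues of `E * S * E` in decreasing order, then for `1 ≤ m ≤ N - 1`,
`λ_{m+1} ≤ ε^(2m) / (1 - ε²) * max_{j,k} |S j k|`. -/
theorem ese_eigenvalue_bound (N : ℕ) (hN : 0 < N)
    (S : Matrix (Fin N) (Fin N) ℝ) (hSsym : S.IsSymm) (hSpd : S.PosDef)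
    (ε : ℝ) (hε0 : 0 < ε) (hε1 : ε < 1)
    (E : Matrix (Fin N) (Fin N) ℝ) (hE : E = Matrix.diagonal fun i : Fin N => ε ^ (i : ℕ))
    (lam : Fin N → ℝ) (hlam_dec : Antitone lam)
    (hlam : ∃ (hH : (E * S * E).IsHermitian) (e : Equiv.Perm (Fin N)),
      lam = hH.eigenvalues ∘ e)
    (m : ℕ) (hm1 : 1 ≤ m) (hmN : m < N) :
    lam ⟨m, hmN⟩ ≤ ε ^ (2 * m) / (1 - ε ^ 2) * (⨆ j : Fin N, ⨆ k : Fin N, |S j k|) := by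
  classical
  haveI : Nonempty (Fin N) := Fin.pos_iff_nonempty.mp hN
  obtain ⟨hH, e, hle⟩ := hlam
  set μ := hH.eigenvalues with hμ
  set v := hH.eigenvectorBasis with hv
  have hm1N : m + 1 ≤ N := hmN
  set idx : Fin (m + 1) → Fin N := Fin.castLE hm1N with hidx
  set f : Fin (m + 1) → EuclideanSpace ℝ (Fin N) := fun i => v (e (idx i)) with hf
  have hf_on : Orthonormal ℝ f :=
    v.orthonormal.comp _ (e.injective.comp (Fin.castLE_injective hm1N))
  set U := Submodule.span ℝ (Set.range f) with hUdef
  have hU : Module.finrank ℝ U = m + 1 := by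
    rw [finrank_span_eq_card hf_on.linearIndependent, Fintype.card_fin]
  set ι : Fin (N - m) → Fin N := fun j => ⟨m + (j : ℕ), by omega⟩ with hι
  have hι_inj : Function.Injective ι := by
    intro a b hab
    simp only [hι, Fin.mk.injEq] at hab
    exact Fin.ext (by omega)
  set g : Fin (N - m) → EuclideanSpace ℝ (Fin N) := fun j => EuclideanSpace.single (ι j) 1
    with hg
  have hg_on : Orthonormal ℝ g := by
    have h := (EuclideanSpace.basisFun (Fin N) ℝ).orthonormal.comp ι hι_inj
    have heq : g = (⇑(EuclideanSpace.basisFun (Fin N) ℝ)) ∘ ι := by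
      funext j; simp [hg, EuclideanSpace.basisFun_apply]
    rw [heq]; exact h
  set V := Submodule.span ℝ (Set.range g) with hVdef
  have hV : Module.finrank ℝ V = N - m := by
    rw [finrank_span_eq_card hg_on.linearIndependent, Fintype.card_fin]
  have hVcoord : ∀ y ∈ V, ∀ j : Fin N, (j : ℕ) < m → y j = 0 := by
    intro y hy
    refine Submodule.span_induction (p := fun y _ => ∀ j : Fin N, (j : ℕ) < m → y j = 0)
      ?_ ?_ ?_ ?_ hy
    · rintro _ ⟨a, rfl⟩ j hj
      show EuclideanSpace.single (ι a) 1 j = 0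
      rw [EuclideanSpace.single_apply]
      have : j ≠ ι a := by
        intro hja
        have : (j : ℕ) = m + (a : ℕ) := by rw [hja, hι]
        omega
      simp [this]
    · intro j hj; rfl
    · intro a b _ _ ha hb j hj
      have : (a + b) j = a j + b j := rfl
      rw [this, ha j hj, hb j hj, add_zero]
    · intro r a _ ha j hj
      have : (r • a) j = r * a j := rfl
      rw [this, ha j hj, mul_zero]
  have hdim := Submodule.finrank_sup_add_finrank_inf_eq U V
  have hle2 : Module.finrank ℝ ↥(U ⊔ V) ≤ N := by
    have h := Submodule.finrank_le (U ⊔ V)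
    simpa [finrank_euclideanSpace, Fintype.card_fin] using h
  have hne : U ⊓ V ≠ ⊥ := by
    intro hbot
    rw [hbot, finrank_bot, hU, hV] at hdim
    omega
  obtain ⟨x, hxUV, hx0⟩ := Submodule.exists_mem_ne_zero_of_ne_bot hne
  have hxU : x ∈ U := hxUV.1
  have hxV : x ∈ V := hxUV.2
  rw [hUdef, Submodule.mem_span_range_iff_exists_fun] at hxU
  obtain ⟨c, hc⟩ := hxU
  have horth := orthonormal_iff_ite.mp hf_on
  have hxx : ⟪x, x⟫ = ∑ i, c i ^ 2 := by
    rw [← hc]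
    simp only [sum_inner, inner_sum, real_inner_smul_left, real_inner_smul_right, horth,
      mul_ite, mul_one, mul_zero, Finset.sum_ite_eq', Finset.mem_univ, if_true]
    exact Finset.sum_congr rfl fun i _ => by ring
  set T := Matrix.toEuclideanLin (E * S * E) with hT
  have hTf : ∀ i, T (f i) = μ (e (idx i)) • f i := by
    intro i
    have h := hH.mulVec_eigenvectorBasis (e (idx i))
    rw [← hv, ← hμ] at h
    apply (WithLp.equiv 2 (Fin N → ℝ)).injective
    exact h
  have hTx : T x = ∑ i, (c i * μ (e (idx i))) • f i := by
    rw [← hc, map_sum]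
    refine Finset.sum_congr rfl fun i _ => ?_
    rw [_root_.map_smul, hTf i, smul_smul]
  have hxTx : ⟪x, T x⟫ = ∑ i, c i ^ 2 * μ (e (idx i)) := by
    rw [hTx, ← hc]
    simp only [sum_inner, inner_sum, real_inner_smul_left, real_inner_smul_right, horth,
      mul_ite, mul_one, mul_zero, Finset.sum_ite_eq', Finset.mem_univ, if_true]
    exact Finset.sum_congr rfl fun i _ => by ring
  have hmono : ∀ i : Fin (m + 1), lam ⟨m, hmN⟩ ≤ μ (e (idx i)) := by
    intro i
    have h1 : lam (idx i) = μ (e (idx i)) := by rw [hle]; rfl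
    rw [← h1]
    refine hlam_dec ?_
    have : (idx i : ℕ) ≤ m := by
      have := i.isLt
      simp only [hidx, Fin.coe_castLE]
      omega
    exact this
  have hlow : lam ⟨m, hmN⟩ * ⟪x, x⟫ ≤ ⟪x, T x⟫ := by
    rw [hxx, hxTx, Finset.mul_sum]
    refine Finset.sum_le_sum fun i _ => ?_
    have h := mul_le_mul_of_nonneg_left (hmono i) (sq_nonneg (c i))
    linarith
  set u : Fin N → ℝ := (WithLp.equiv 2 (Fin N → ℝ)) x with hu
  have hucoord : ∀ j : Fin N, (j : ℕ) < m → u j = 0 := fun j hj => hVcoord x hxV j hj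
  have hQeq : ⟪x, T x⟫ = u ⬝ᵥ ((E * S * E) *ᵥ u) := by
    simp only [PiLp.inner_apply, RCLike.inner_apply, conj_trivial]
    rw [dotProduct]
    exact Finset.sum_congr rfl fun j _ => by rw [mul_comm]; rfl
  have hxxd : ⟪x, x⟫ = u ⬝ᵥ u := by
    simp only [PiLp.inner_apply, RCLike.inner_apply, conj_trivial]
    rfl
  have hupper := quad_upper N m hN S ε hε0 hε1 u hucoord
  rw [← hE] at hupper
  have hpos : (0:ℝ) < ⟪x, x⟫ := by
    rw [real_inner_self_eq_norm_sq]
    exact pow_pos (norm_pos_iff.mpr hx0) 2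
  have hfinal : lam ⟨m, hmN⟩ * ⟪x, x⟫ ≤
      ε ^ (2 * m) / (1 - ε ^ 2) * (⨆ j : Fin N, ⨆ k : Fin N, |S j k|) * ⟪x, x⟫ := by
    calc lam ⟨m, hmN⟩ * ⟪x, x⟫ ≤ ⟪x, T x⟫ := hlow
      _ = u ⬝ᵥ ((E * S * E) *ᵥ u) := hQeq
      _ ≤ ε ^ (2 * m) / (1 - ε ^ 2) * (⨆ j : Fin N, ⨆ k : Fin N, |S j k|) * (u ⬝ᵥ u) := hupper
      _ = _ := by rw [hxxd]
  exact le_of_mul_le_mul_right hfinal hpos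
end

section
/- Let f be analytic on and inside the Bernstein ellipse E_ρ (image of the circle |z| = ρ under z ↦ (z + z^{-1})/2) for some ρ > 1, with |f(z)| ≤ M on E_ρ. Then its Chebyshev coefficients c_j = (2/π)∫_{-1}^1 f(t) T_j(t)/√(1−t²) dt (with the factor 1/π for j = 0) satisfy |c_0| ≤ M and |c_j| ≤ 2Mρ^{-j} for j ≥ 1. -/
open scoped Real
open MeasureTheory Set

/-- The closed region bounded by the Bernstein ellipse `E_ρ`: the image of the closed
annulus `1 ≤ |z| ≤ ρ` under the Joukowsky map `z ↦ (z + z⁻¹)/2`. -/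
def bernsteinEllipseRegion (ρ : ℝ) : Set ℂ :=
  (fun z : ℂ => (z + z⁻¹) / 2) '' {z : ℂ | 1 ≤ ‖z‖ ∧ ‖z‖ ≤ ρ}

/-- The `j`-th Chebyshev coefficient of `f`:
`c_0 = (1/π) ∫ f(t)/√(1-t²) dt`, `c_j = (2/π) ∫ f(t) T_j(t)/√(1-t²) dt` for `j ≥ 1`. -/
noncomputable def chebCoeff (f : ℂ → ℂ) (j : ℕ) : ℂ :=
  ((if j = 0 then 1 else 2) / (π : ℂ)) *
    ∫ t in (-1 : ℝ)..1, f t * ((Polynomial.Chebyshev.T ℝ (j : ℤ)).eval t /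
      Real.sqrt (1 - t ^ 2) : ℝ)

lemma cos_image_Ioo : Real.cos '' Set.Ioo 0 π = Set.Ioo (-1 : ℝ) 1 := by
  ext t
  simp only [Set.mem_image, Set.mem_Ioo]
  constructor
  · rintro ⟨θ, ⟨h0, hπ⟩, rfl⟩
    constructor
    · have h := Real.strictAntiOn_cos ⟨h0.le, hπ.le⟩ ⟨Real.pi_pos.le, le_refl _⟩ hπ
      simpa [Real.cos_pi] using h
    · have h := Real.strictAntiOn_cos ⟨le_refl (0:ℝ), Real.pi_pos.le⟩ ⟨h0.le, hπ.le⟩ h0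
      simpa [Real.cos_zero] using h
  · rintro ⟨h1, h2⟩
    refine ⟨Real.arccos t, ⟨Real.arccos_pos.2 h2, ?_⟩, Real.cos_arccos h1.le h2.le⟩
    rcases lt_or_eq_of_le (Real.arccos_le_pi t) with h | h
    · exact h
    · exfalso
      have ht := Real.cos_arccos h1.le h2.le
      rw [h, Real.cos_pi] at ht
      linarith

lemma cheb_cov (f : ℂ → ℂ) (j : ℤ) :
    (∫ t in (-1:ℝ)..1, f t * ((Polynomial.eval t (Polynomial.Chebyshev.T ℝ j)) / Real.sqrt (1 - t ^ 2) : ℝ))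
      = ∫ θ in Set.Ioo 0 π, f (Real.cos θ) * ((Real.cos (j * θ) : ℝ) : ℂ) := by
  rw [intervalIntegral.integral_of_le (by norm_num : (-1:ℝ) ≤ 1),
    MeasureTheory.integral_Ioc_eq_integral_Ioo, ← cos_image_Ioo,
    MeasureTheory.integral_image_eq_integral_abs_deriv_smul measurableSet_Ioo
      (fun x _ => (Real.hasDerivAt_cos x).hasDerivWithinAt)
      (Real.injOn_cos.mono Set.Ioo_subset_Icc_self)]
  refine MeasureTheory.setIntegral_congr_fun measurableSet_Ioo (fun θ hθ => ?_)
  obtain ⟨h0, hπ⟩ := hθ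
  have hs : 0 < Real.sin θ := Real.sin_pos_of_pos_of_lt_pi h0 hπ
  have hsqrt : Real.sqrt (1 - Real.cos θ ^ 2) = Real.sin θ := by
    rw [← Real.sin_sq, Real.sqrt_sq hs.le]
  rw [Polynomial.Chebyshev.T_real_cos, hsqrt, abs_of_nonpos (by linarith : -Real.sin θ ≤ 0),
    neg_neg, Complex.real_smul]
  have hs' : (Real.sin θ : ℂ) ≠ 0 := Complex.ofReal_ne_zero.2 hs.ne'
  push_cast
  have hs'' : Complex.sin (θ:ℂ) ≠ 0 := by rw [← Complex.ofReal_sin]; exact hs'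
  field_simp

lemma mem_region {ρ : ℝ} (z : ℂ) (h1 : 1 ≤ ‖z‖) (h2 : ‖z‖ ≤ ρ) :
    (z + z⁻¹) / 2 ∈ bernsteinEllipseRegion ρ := ⟨z, ⟨h1, h2⟩, rfl⟩

lemma joukowsky_inv (z : ℂ) : (z⁻¹ + (z⁻¹)⁻¹) / 2 = (z + z⁻¹) / 2 := by rw [inv_inv, add_comm]

lemma mem_region' {ρ : ℝ} (hρ : 1 ≤ ρ) (z : ℂ) (h1 : ρ⁻¹ ≤ ‖z‖)
    (h2 : ‖z‖ ≤ 1) : (z + z⁻¹) / 2 ∈ bernsteinEllipseRegion ρ := by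
  have hρ0 : 0 < ρ := lt_of_lt_of_le one_pos hρ
  have hz : 0 < ‖z‖ := lt_of_lt_of_le (inv_pos.2 hρ0) h1
  rw [← joukowsky_inv]
  apply mem_region
  · rw [norm_inv]
    exact (one_le_inv₀ hz).2 h2
  · rw [norm_inv]
    rw [inv_le_comm₀ hz hρ0]
    exact h1

lemma region_mem_nhds {ρ : ℝ} (hρ : 1 < ρ) {z : ℂ} (h1 : 1 < ‖z‖)
    (h2 : ‖z‖ < ρ) : bernsteinEllipseRegion ρ ∈ nhds ((z + z⁻¹) / 2) := by
  have hz : z ≠ 0 := by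
    intro h; rw [h, norm_zero] at h1; linarith
  have hJ : AnalyticAt ℂ (fun w : ℂ => (w + w⁻¹) / 2) z :=
    (analyticAt_id.add (analyticAt_inv hz)).div analyticAt_const (by norm_num)
  rcases hJ.eventually_constant_or_nhds_le_map_nhds with h | h
  · exfalso
    have hd : HasDerivAt (fun w : ℂ => (w + w⁻¹) / 2) ((1 + -(z ^ 2)⁻¹) / 2) z :=
      ((hasDerivAt_id z).add (hasDerivAt_inv hz)).div_const 2
    have h0 : deriv (fun w : ℂ => (w + w⁻¹) / 2) z = 0 := by
      rw [Filter.EventuallyEq.deriv_eq h]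
      exact deriv_const _ _
    rw [hd.deriv] at h0
    have hz2 : (z : ℂ) ^ 2 ≠ 0 := pow_ne_zero 2 hz
    have hzz : z ^ 2 = 1 := by
      field_simp at h0
      linear_combination h0
    have habs : ‖z‖ ^ 2 = 1 := by
      rw [← norm_pow, hzz, norm_one]
    nlinarith
  · refine h ?_
    rw [Filter.mem_map]
    have hopen : IsOpen {w : ℂ | 1 < ‖w‖ ∧ ‖w‖ < ρ} := by
      have he : {w : ℂ | 1 < ‖w‖ ∧ ‖w‖ < ρ}
          = (fun w : ℂ => ‖w‖) ⁻¹' Set.Ioo 1 ρ := rfl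
      rw [he]
      exact isOpen_Ioo.preimage continuous_norm
    exact Filter.mem_of_superset (hopen.mem_nhds ⟨h1, h2⟩)
      (fun w hw => mem_region w hw.1.le hw.2.le)

lemma circle_to_cos (f : ℂ → ℂ) (hcont : Continuous fun θ : ℝ => f (Complex.cos θ))
    (j : ℕ) (hj : 1 ≤ j) :
    (∮ z in C(0, 1), f ((z + z⁻¹) / 2) * z ^ (j - 1))
      = Complex.I * (2 * ∫ θ in Set.Ioo 0 π,
          f ((Real.cos θ : ℝ) : ℂ) * ((Real.cos (j * θ) : ℝ) : ℂ)) := by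
  set g : ℝ → ℂ := fun θ => f (Complex.cos θ) * Complex.exp (θ * Complex.I) ^ j with hg
  have hgc : Continuous g :=
    hcont.mul ((Complex.continuous_exp.comp
      (Complex.continuous_ofReal.mul continuous_const)).pow j)
  have e1 : ∀ θ : ℝ, deriv (circleMap 0 1) θ •
      (f ((circleMap 0 1 θ + (circleMap 0 1 θ)⁻¹) / 2) * circleMap 0 1 θ ^ (j - 1))
      = Complex.I * g θ := by
    intro θ
    have hm : circleMap 0 1 θ = Complex.exp (θ * Complex.I) := by simp [circleMap]
    have hcos : (Complex.exp (θ * Complex.I) + (Complex.exp (θ * Complex.I))⁻¹) / 2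
        = Complex.cos θ := by
      rw [Complex.cos, neg_mul, Complex.exp_neg]
    have hpow : Complex.exp (θ * Complex.I) ^ j
        = Complex.exp (θ * Complex.I) ^ (j - 1) * Complex.exp (θ * Complex.I) := by
      conv_lhs => rw [← Nat.sub_add_cancel hj]
      rw [pow_succ]
    rw [deriv_circleMap, hm, smul_eq_mul, hcos, hg]
    simp only []
    rw [hpow]
    ring
  have e2 : (∮ z in C(0, 1), f ((z + z⁻¹) / 2) * z ^ (j - 1))
      = Complex.I * ∫ θ in (0 : ℝ)..(2 * π), g θ := by
    rw [circleIntegral]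
    rw [intervalIntegral.integral_congr (fun θ _ => e1 θ)]
    exact intervalIntegral.integral_const_mul _ _
  have e3 : (∫ θ in (π : ℝ)..(2 * π), g θ) = ∫ θ in (0 : ℝ)..π, g (2 * π - θ) := by
    have h := intervalIntegral.integral_comp_sub_left g (2 * π) (a := 0) (b := π)
    rw [h]
    congr 1 <;> ring
  have e4 : ∀ θ : ℝ, g (2 * π - θ)
      = f (Complex.cos θ) * (Complex.exp (θ * Complex.I) ^ j)⁻¹ := by
    intro θ
    have hc : Complex.cos ((2 * π - θ : ℝ) : ℂ) = Complex.cos θ := by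
      push_cast
      simp [Complex.cos_sub, Complex.cos_two_pi, Complex.sin_two_pi]
    have he : Complex.exp (((2 * π - θ : ℝ) : ℂ) * Complex.I)
        = (Complex.exp (θ * Complex.I))⁻¹ := by
      push_cast
      rw [sub_mul, Complex.exp_sub, Complex.exp_two_pi_mul_I]
      rw [one_div]
    rw [hg]
    simp only []
    rw [hc, he, inv_pow]
  have e5 : ∀ θ : ℝ, g θ + g (2 * π - θ)
      = f ((Real.cos θ : ℝ) : ℂ) * (2 * ((Real.cos (j * θ) : ℝ) : ℂ)) := by
    intro θ
    rw [e4 θ, hg]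
    simp only []
    have hsum : Complex.exp (θ * Complex.I) ^ j + (Complex.exp (θ * Complex.I) ^ j)⁻¹
        = 2 * Complex.cos (j * θ) := by
      rw [← Complex.exp_nat_mul, ← mul_assoc, Complex.cos, neg_mul, Complex.exp_neg]
      ring
    have hjc : Complex.cos ((j : ℂ) * (θ : ℂ)) = ((Real.cos (j * θ) : ℝ) : ℂ) := by
      rw [Complex.ofReal_cos]
      push_cast
      ring_nf
    have hfc : Complex.cos (θ : ℂ) = ((Real.cos θ : ℝ) : ℂ) := (Complex.ofReal_cos θ).symm
    rw [hfc] at *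
    calc f ((Real.cos θ : ℝ) : ℂ) * Complex.exp (θ * Complex.I) ^ j
          + f ((Real.cos θ : ℝ) : ℂ) * (Complex.exp (θ * Complex.I) ^ j)⁻¹
        = f ((Real.cos θ : ℝ) : ℂ) * (Complex.exp (θ * Complex.I) ^ j
            + (Complex.exp (θ * Complex.I) ^ j)⁻¹) := by ring
      _ = _ := by rw [hsum, hjc]
  have e6 : (∫ θ in (0 : ℝ)..(2 * π), g θ)
      = ∫ θ in (0 : ℝ)..π, f ((Real.cos θ : ℝ) : ℂ) * (2 * ((Real.cos (j * θ) : ℝ) : ℂ)) := by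
    have h2c : Continuous fun θ : ℝ => g (2 * π - θ) :=
      hgc.comp (continuous_const.sub continuous_id)
    rw [← intervalIntegral.integral_add_adjacent_intervals
      (hgc.intervalIntegrable 0 π) (hgc.intervalIntegrable π (2 * π)), e3,
      ← intervalIntegral.integral_add (hgc.intervalIntegrable 0 π)
        (h2c.intervalIntegrable 0 π)]
    exact intervalIntegral.integral_congr (fun θ _ => e5 θ)
  rw [e2, e6]
  rw [intervalIntegral.integral_of_le Real.pi_pos.le, MeasureTheory.integral_Ioc_eq_integral_Ioo]
  rw [show (fun θ => f ((Real.cos θ : ℝ) : ℂ) * (2 * ((Real.cos (j * θ) : ℝ) : ℂ)))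
      = (fun θ => 2 * (f ((Real.cos θ : ℝ) : ℂ) * ((Real.cos (j * θ) : ℝ) : ℂ))) from
    funext fun θ => by ring]
  rw [MeasureTheory.integral_const_mul]

lemma F_diffAt {ρ : ℝ} (hρ : 1 < ρ) {f : ℂ → ℂ}
    (hf : DifferentiableOn ℂ f (bernsteinEllipseRegion ρ)) {z : ℂ}
    (h1 : ρ⁻¹ < ‖z‖) (h2 : ‖z‖ < 1) :
    DifferentiableAt ℂ (fun w : ℂ => f ((w + w⁻¹) / 2)) z := by
  have hρ0 : 0 < ρ := lt_trans one_pos hρ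
  have hzpos : 0 < ‖z‖ := lt_trans (inv_pos.2 hρ0) h1
  have hz0 : z ≠ 0 := by intro h; rw [h, norm_zero] at hzpos; exact lt_irrefl _ hzpos
  have hinv1 : 1 < ‖z⁻¹‖ := by
    rw [norm_inv]; exact (one_lt_inv₀ hzpos).2 h2
  have hinv2 : ‖z⁻¹‖ < ρ := by
    rw [norm_inv]; exact (inv_lt_comm₀ hzpos hρ0).2 h1
  have hmem : bernsteinEllipseRegion ρ ∈ nhds ((z + z⁻¹) / 2) := by
    rw [← joukowsky_inv z]
    exact region_mem_nhds hρ hinv1 hinv2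
  have hfd : DifferentiableAt ℂ f ((z + z⁻¹) / 2) := hf.differentiableAt hmem
  have hJd : DifferentiableAt ℂ (fun w : ℂ => (w + w⁻¹) / 2) z := by
    apply DifferentiableAt.div_const
    exact differentiableAt_id.add (differentiableAt_inv hz0)
  exact hfd.comp z hJd

/-- **Decay of Chebyshev coefficients of analytic functions.** If `f` is analytic on the
closed region bounded by the Bernstein ellipse `E_ρ`, `ρ > 1`, with `|f| ≤ M` there, then
`|c_0| ≤ M` and `|c_j| ≤ 2 M ρ⁻ʲ` for `j ≥ 1`. -/
theorem chebCoeff_decay_of_analytic (ρ M : ℝ) (hρ : 1 < ρ) (hM : 0 < M)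
    (f : ℂ → ℂ) (hf : DifferentiableOn ℂ f (bernsteinEllipseRegion ρ))
    (hbound : ∀ z ∈ bernsteinEllipseRegion ρ, ‖f z‖ ≤ M) :
    ‖chebCoeff f 0‖ ≤ M ∧
    ∀ j : ℕ, 1 ≤ j → ‖chebCoeff f j‖ ≤ 2 * M * ρ ^ (-(j : ℤ)) := by
  have hρ0 : 0 < ρ := lt_trans one_pos hρ
  have hcos_mem : ∀ θ : ℝ, ((Real.cos θ : ℝ) : ℂ) ∈ bernsteinEllipseRegion ρ := by
    intro θ
    have h : ((Real.cos θ : ℝ) : ℂ)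
        = (Complex.exp (θ * Complex.I) + (Complex.exp (θ * Complex.I))⁻¹) / 2 := by
      rw [Complex.ofReal_cos, Complex.cos, neg_mul, Complex.exp_neg]
    rw [h]
    exact mem_region _ (by rw [Complex.norm_exp_ofReal_mul_I])
      (by rw [Complex.norm_exp_ofReal_mul_I]; exact hρ.le)
  have hfc : Continuous fun θ : ℝ => f (Complex.cos θ) := by
    have hm : ∀ θ : ℝ, Complex.cos (θ : ℂ) ∈ bernsteinEllipseRegion ρ := fun θ => by
      rw [← Complex.ofReal_cos]; exact hcos_mem θ
    exact hf.continuousOn.comp_continuous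
      (Complex.continuous_cos.comp Complex.continuous_ofReal) hm
  have hcont2 : ∀ c : ℝ,
      Continuous fun θ : ℝ => f ((Real.cos θ : ℝ) : ℂ) * ((Real.cos (c * θ) : ℝ) : ℂ) := by
    intro c
    apply Continuous.mul
    · have he : (fun θ : ℝ => f ((Real.cos θ : ℝ) : ℂ))
          = fun θ : ℝ => f (Complex.cos θ) := by
        funext θ; rw [Complex.ofReal_cos]
      rw [he]; exact hfc
    · exact Complex.continuous_ofReal.comp
        (Real.continuous_cos.comp (continuous_const.mul continuous_id))
  have hIoobound : ∀ c : ℝ,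
      ‖∫ θ in Set.Ioo 0 π, f ((Real.cos θ : ℝ) : ℂ) * ((Real.cos (c * θ) : ℝ) : ℂ)‖
        ≤ M * π := by
    intro c
    have h1 : volume (Set.Ioo (0 : ℝ) π) < ⊤ := by
      rw [Real.volume_Ioo]; exact ENNReal.ofReal_lt_top
    have h2 : ∀ θ ∈ Set.Ioo (0 : ℝ) π,
        ‖f ((Real.cos θ : ℝ) : ℂ) * ((Real.cos (c * θ) : ℝ) : ℂ)‖ ≤ M := by
      intro θ _
      rw [norm_mul]
      have ha : ‖f ((Real.cos θ : ℝ) : ℂ)‖ ≤ M := by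
        exact hbound _ (hcos_mem θ)
      have hb : ‖((Real.cos (c * θ) : ℝ) : ℂ)‖ ≤ 1 := by
        rw [Complex.norm_real, Real.norm_eq_abs]; exact Real.abs_cos_le_one _
      calc ‖f ((Real.cos θ : ℝ) : ℂ)‖ * ‖((Real.cos (c * θ) : ℝ) : ℂ)‖
          ≤ M * 1 := mul_le_mul ha hb (norm_nonneg _) hM.le
        _ = M := mul_one M
    have h3 := MeasureTheory.norm_setIntegral_le_of_norm_le_const h1 h2
    rw [Real.volume_real_Ioo_of_le Real.pi_pos.le, sub_zero] at h3
    exact h3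
  constructor
  · -- j = 0 case
    rw [chebCoeff, if_pos rfl, cheb_cov f ((0 : ℕ) : ℤ), norm_mul]
    have habs : ‖(1 : ℂ) / (π : ℂ)‖ = 1 / π := by
      rw [norm_div, norm_one, Complex.norm_real, Real.norm_of_nonneg Real.pi_pos.le]
    have hb := hIoobound (((0 : ℕ) : ℤ) : ℝ)
    rw [habs]
    calc 1 / π * ‖∫ θ in Set.Ioo 0 π,
            f ((Real.cos θ : ℝ) : ℂ) * ((Real.cos ((((0:ℕ):ℤ):ℝ) * θ) : ℝ) : ℂ)‖
        ≤ 1 / π * (M * π) := by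
          apply mul_le_mul_of_nonneg_left hb
          positivity
      _ = M := by field_simp
  · intro j hj
    have hA := circle_to_cos f hfc j hj
    have hS : (∫ θ in Set.Ioo 0 π,
          f ((Real.cos θ : ℝ) : ℂ) * ((Real.cos ((((j:ℕ):ℤ):ℝ) * θ) : ℝ) : ℂ))
        = (∮ z in C(0, 1), f ((z + z⁻¹) / 2) * z ^ (j - 1)) / (2 * Complex.I) := by
      rw [eq_div_iff (by simp [Complex.I_ne_zero] : (2 : ℂ) * Complex.I ≠ 0), hA]
      simp only [Int.cast_natCast]
      ring
    have hπI : ((π : ℂ) * Complex.I) ≠ 0 := by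
      apply mul_ne_zero _ Complex.I_ne_zero
      exact Complex.ofReal_ne_zero.2 Real.pi_ne_zero
    have hcj : chebCoeff f j
        = (∮ z in C(0, 1), f ((z + z⁻¹) / 2) * z ^ (j - 1)) / ((π : ℂ) * Complex.I) := by
      rw [chebCoeff, if_neg (by omega : ¬ j = 0), cheb_cov f ((j : ℕ) : ℤ), hS,
        div_mul_div_comm,
        show (π : ℂ) * (2 * Complex.I) = 2 * ((π : ℂ) * Complex.I) from by ring,
        mul_div_mul_left _ _ (two_ne_zero)]
    have habs_cj : ‖chebCoeff f j‖
        = ‖∮ z in C(0, 1), f ((z + z⁻¹) / 2) * z ^ (j - 1)‖ / π := by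
      rw [hcj, norm_div, norm_mul, Complex.norm_I, Complex.norm_real,
        Real.norm_of_nonneg Real.pi_pos.le, mul_one]
    have hr_bound : ∀ r : ℝ, r ∈ Set.Ioo ρ⁻¹ 1 →
        ‖chebCoeff f j‖ ≤ 2 * M * r ^ j := by
      intro r hr
      have hr0 : 0 < r := lt_trans (inv_pos.2 hρ0) hr.1
      have habs_mem : ∀ z : ℂ, z ∈ Metric.closedBall (0 : ℂ) 1 \ Metric.ball 0 r →
          r ≤ ‖z‖ ∧ ‖z‖ ≤ 1 := by
        intro z hz
        obtain ⟨hz1, hz2⟩ := hz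
        rw [Metric.mem_closedBall, dist_zero_right] at hz1
        simp only [Metric.mem_ball, dist_zero_right, not_lt] at hz2
        exact ⟨hz2, hz1⟩
      have heq : (∮ z in C(0, 1), f ((z + z⁻¹) / 2) * z ^ (j - 1))
          = ∮ z in C(0, r), f ((z + z⁻¹) / 2) * z ^ (j - 1) := by
        apply Complex.circleIntegral_eq_of_differentiable_on_annulus_off_countable hr0
          hr.2.le Set.countable_empty
        · apply ContinuousOn.mul
          · apply ContinuousOn.comp hf.continuousOn
            · apply ContinuousOn.div_const
              apply ContinuousOn.add continuousOn_id
              apply ContinuousOn.inv₀ continuousOn_id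
              intro z hz
              obtain ⟨hz1, hz2⟩ := habs_mem z hz
              intro h0
              have h0' : z = 0 := h0
              rw [h0', norm_zero] at hz1
              linarith
            · intro z hz
              obtain ⟨hz1, hz2⟩ := habs_mem z hz
              exact mem_region' hρ.le z (le_trans hr.1.le hz1) hz2
          · exact (continuous_pow _).continuousOn
        · intro z hz
          simp only [Set.diff_empty] at hz
          obtain ⟨hz1, hz2⟩ := hz
          rw [Metric.mem_ball, dist_zero_right] at hz1
          simp only [Metric.mem_closedBall, dist_zero_right,
            not_le] at hz2
          exact (F_diffAt hρ hf (lt_trans hr.1 hz2) hz1).mul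
            ((differentiable_pow _).differentiableAt)
      have hbnd : ‖∮ z in C(0, r), f ((z + z⁻¹) / 2) * z ^ (j - 1)‖
          ≤ 2 * π * r * (M * r ^ (j - 1)) := by
        have h := circleIntegral.norm_integral_le_of_norm_le_const
          (f := fun z : ℂ => f ((z + z⁻¹) / 2) * z ^ (j - 1)) (c := 0) (R := r)
          (C := M * r ^ (j - 1)) hr0.le ?_
        · exact h
        · intro z hz
          rw [mem_sphere_zero_iff_norm] at hz
          rw [norm_mul, norm_pow, hz]
          apply mul_le_mul_of_nonneg_right _ (by positivity)
          apply hbound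
          apply mem_region' hρ.le z (by rw [hz]; exact hr.1.le) (by rw [hz]; exact hr.2.le)
      rw [habs_cj, heq]
      have hrr : r * r ^ (j - 1) = r ^ j := by
        conv_rhs => rw [← Nat.sub_add_cancel hj]
        rw [pow_succ]; ring
      calc ‖∮ z in C(0, r), f ((z + z⁻¹) / 2) * z ^ (j - 1)‖ / π
          ≤ (2 * π * r * (M * r ^ (j - 1))) / π := by
            exact div_le_div_of_nonneg_right hbnd Real.pi_pos.le
        _ = 2 * M * (r * r ^ (j - 1)) := by field_simp
        _ = 2 * M * r ^ j := by rw [hrr]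
    have hρinv : ρ⁻¹ < 1 := inv_lt_one_of_one_lt₀ hρ
    have hlim : Filter.Tendsto (fun r : ℝ => 2 * M * r ^ j)
        (nhdsWithin ρ⁻¹ (Set.Ioi ρ⁻¹)) (nhds (2 * M * (ρ⁻¹) ^ j)) :=
      ((continuous_const.mul (continuous_pow j)).tendsto ρ⁻¹).mono_left nhdsWithin_le_nhds
    have hev : ∀ᶠ r in nhdsWithin ρ⁻¹ (Set.Ioi ρ⁻¹),
        ‖chebCoeff f j‖ ≤ 2 * M * r ^ j := by
      filter_upwards [Ioo_mem_nhdsGT_of_mem ⟨le_refl _, hρinv⟩] with r hr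
      exact hr_bound r hr
    have hle := ge_of_tendsto hlim hev
    rw [zpow_neg, zpow_natCast, ← inv_pow]
    exact hle
end

section
/- Let J ∈ ℝ^{N×N} with J_{ij} = T_{j−1}(t_{i−1}) for points t_0,...,t_{N−1} ∈ [−1,1], and let D = diag(1, ρ^{-1}, ..., ρ^{-(N−1)}) with ρ > 1. Then for 2 ≤ j ≤ N the singular values of X = JD satisfy σ_j(X) ≤ √N · ρ^{−j+2} / √(ρ² − 1). -/
open Matrix Finset

private theorem dot_sum_sum' {m N : ℕ} (c d : Fin m → ℝ) (g h : Fin m → (Fin N → ℝ)) :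
    (∑ i, c i • g i) ⬝ᵥ (∑ i, d i • h i) = ∑ i, ∑ i', c i * d i' * (g i ⬝ᵥ h i') := by
  simp only [dotProduct, Finset.sum_apply, Pi.smul_apply, smul_eq_mul, Finset.sum_mul,
    Finset.mul_sum]
  conv_rhs => rw [Finset.sum_comm]
  rw [Finset.sum_comm]
  refine Finset.sum_congr rfl fun i _ => ?_
  rw [Finset.sum_comm]
  refine Finset.sum_congr rfl fun i' _ => ?_
  refine Finset.sum_congr rfl fun k _ => ?_
  ring

private theorem cheb_abs_le (n : ℤ) (x : ℝ) (hx : x ∈ Set.Icc (-1:ℝ) 1) :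
    |(Polynomial.Chebyshev.T ℝ n).eval x| ≤ 1 := by
  obtain ⟨h1, h2⟩ := hx
  have : x = Real.cos (Real.arccos x) := (Real.cos_arccos h1 h2).symm
  rw [this, Polynomial.Chebyshev.T_real_cos]
  exact Real.abs_cos_le_one _

private theorem geom_tail_le_s11 (N jn : ℕ) (r : ℝ) (hr0 : 0 ≤ r) (hr1 : r < 1) :
    ∑ k ∈ Finset.univ.filter (fun k : Fin N => jn ≤ (k:ℕ)), r^(k:ℕ) ≤ r^jn / (1 - r) := by
  set F := Finset.univ.filter (fun k : Fin N => jn ≤ (k:ℕ)) with hF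
  have himg : F.image Fin.val ⊆ Finset.Ico jn N := by
    intro m hm
    simp only [Finset.mem_image, hF, Finset.mem_filter] at hm
    obtain ⟨k, ⟨_, hk⟩, rfl⟩ := hm
    exact Finset.mem_Ico.mpr ⟨hk, k.isLt⟩
  have h1 : ∑ k ∈ F, r^(k:ℕ) = ∑ m ∈ F.image Fin.val, r^m := by
    rw [Finset.sum_image (fun a _ b _ h => Fin.val_injective h)]
  have h2 : ∑ m ∈ F.image Fin.val, r^m ≤ ∑ m ∈ Finset.Ico jn N, r^m :=
    Finset.sum_le_sum_of_subset_of_nonneg himg (fun m _ _ => pow_nonneg hr0 m)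
  have h3 : ∑ m ∈ Finset.Ico jn N, r^m ≤ r^jn / (1-r) := by
    rcases le_or_gt jn N with h | h
    · rw [Finset.sum_Ico_eq_sum_range]
      simp only [pow_add]
      rw [← Finset.mul_sum]
      have hgs : ∑ i ∈ Finset.range (N - jn), r ^ i ≤ 1 / (1 - r) := by
        rw [geom_sum_eq (ne_of_lt hr1) (N - jn),
          show (r^(N-jn) - 1)/(r-1) = (1 - r^(N-jn))/(1-r) by rw [← neg_div_neg_eq]; ring_nf]
        rw [div_le_div_iff_of_pos_right (by linarith)]
        have : (0:ℝ) ≤ r ^ (N - jn) := pow_nonneg hr0 _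
        linarith
      calc r ^ jn * ∑ i ∈ Finset.range (N - jn), r ^ i
          ≤ r ^ jn * (1 / (1 - r)) := mul_le_mul_of_nonneg_left hgs (pow_nonneg hr0 _)
        _ = r ^ jn / (1 - r) := by ring
    · rw [Finset.Ico_eq_empty (by omega)]
      simp only [Finset.sum_empty]
      exact div_nonneg (pow_nonneg hr0 _) (by linarith)
  linarith

private theorem quad_form_upper (N jn : ℕ) (X : Matrix (Fin N) (Fin N) ℝ) (w : Fin N → ℝ)
    (hw : ∀ i k, |X i k| ≤ w k) (v : Fin N → ℝ) (hv : ∀ k : Fin N, (k:ℕ) < jn → v k = 0) :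
    v ⬝ᵥ ((Xᵀ*X) *ᵥ v) ≤
      (N : ℝ) * (∑ k ∈ Finset.univ.filter (fun k : Fin N => jn ≤ (k:ℕ)), (w k)^2) * (v ⬝ᵥ v) := by
  set F := Finset.univ.filter (fun k : Fin N => jn ≤ (k:ℕ)) with hF
  set S := ∑ k ∈ F, (w k)^2 with hS
  have hQ : v ⬝ᵥ ((Xᵀ*X) *ᵥ v) = ∑ i, ((X *ᵥ v) i)^2 := by
    rw [← Matrix.mulVec_mulVec, Matrix.dotProduct_mulVec, Matrix.vecMul_transpose]
    simp [dotProduct, pow_two]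
  have hvv : v ⬝ᵥ v = ∑ k, (v k)^2 := by simp [dotProduct, pow_two]
  have hrow : ∀ i, ((X *ᵥ v) i)^2 ≤ S * (v ⬝ᵥ v) := by
    intro i
    have h1 : (X *ᵥ v) i = ∑ k ∈ F, X i k * v k := by
      rw [Matrix.mulVec, dotProduct]
      exact (Finset.sum_filter_of_ne (fun k _ hne => by
        by_contra hk
        exact hne (by rw [hv k (by omega)]; ring))).symm
    rw [h1]
    calc (∑ k ∈ F, X i k * v k)^2
        ≤ (∑ k ∈ F, (X i k)^2) * (∑ k ∈ F, (v k)^2) :=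
          Finset.sum_mul_sq_le_sq_mul_sq F _ _
      _ ≤ S * (v ⬝ᵥ v) := by
          apply mul_le_mul
          · apply Finset.sum_le_sum
            intro k _
            calc (X i k)^2 = |X i k|^2 := (sq_abs _).symm
              _ ≤ (w k)^2 := pow_le_pow_left₀ (abs_nonneg _) (hw i k) 2
          · rw [hvv]
            exact Finset.sum_le_sum_of_subset_of_nonneg (Finset.filter_subset _ _)
              (fun k _ _ => sq_nonneg _)
          · exact Finset.sum_nonneg fun k _ => sq_nonneg _
          · exact Finset.sum_nonneg fun k _ => sq_nonneg _
  rw [hQ]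
  calc ∑ i, ((X *ᵥ v) i)^2 ≤ ∑ _i : Fin N, S * (v ⬝ᵥ v) :=
        Finset.sum_le_sum fun i _ => hrow i
    _ = (N:ℝ) * S * (v ⬝ᵥ v) := by simp [Finset.sum_const]; ring

private theorem quad_form_eig {N m : ℕ} (A : Matrix (Fin N) (Fin N) ℝ) (hH : A.IsHermitian)
    (f : Fin m → Fin N) (hfinj : Function.Injective f)
    (g : Fin m → EuclideanSpace ℝ (Fin N)) (hg : g = fun i => hH.eigenvectorBasis (f i))
    (v : EuclideanSpace ℝ (Fin N)) (c : Fin m → ℝ) (hc : ∑ i, c i • g i = v) :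
    v ⬝ᵥ (A *ᵥ v) = ∑ i, hH.eigenvalues (f i) * (c i)^2 ∧ v ⬝ᵥ v = ∑ i, (c i)^2 := by
  have horth : Orthonormal ℝ g := hg ▸ hH.eigenvectorBasis.orthonormal.comp f hfinj
  have hdot : ∀ i i', (g i : Fin N → ℝ) ⬝ᵥ (g i' : Fin N → ℝ) = if i = i' then 1 else 0 := by
    intro i i'
    have := orthonormal_iff_ite.mp horth i i'
    rw [← this]
    simp [PiLp.inner_apply, RCLike.inner_apply, dotProduct, mul_comm]
  have hvfun : (v : Fin N → ℝ) = ∑ i, c i • (g i : Fin N → ℝ) := by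
    rw [← hc, WithLp.ofLp_sum]; simp only [WithLp.ofLp_smul]
  have hA_gi : ∀ i, A *ᵥ (g i : Fin N → ℝ) = hH.eigenvalues (f i) • (g i : Fin N → ℝ) := by
    intro i; rw [hg]; exact hH.mulVec_eigenvectorBasis (f i)
  have hAv : A *ᵥ (v : Fin N → ℝ) = ∑ i, (c i * hH.eigenvalues (f i)) • (g i : Fin N → ℝ) := by
    conv_lhs => rw [hvfun]
    rw [← Matrix.mulVecLin_apply, map_sum]
    simp [Matrix.mulVecLin_apply, hA_gi, smul_smul]
  constructor
  · conv_lhs => rw [hAv, hvfun, dot_sum_sum']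
    simp only [hdot, mul_ite, mul_one, mul_zero, Finset.sum_ite_eq, Finset.mem_univ, if_true]
    exact Finset.sum_congr rfl fun i _ => by ring
  · conv_lhs => rw [hvfun, dot_sum_sum']
    simp only [hdot, mul_ite, mul_one, mul_zero, Finset.sum_ite_eq, Finset.mem_univ, if_true]
    exact Finset.sum_congr rfl fun i _ => by ring

set_option maxHeartbeats 1000000 in
/-- **Singular value decay of scaled Chebyshev–Vandermonde matrices.** Let
`J i k = T_k(t_i)` for points `t_i ∈ [-1, 1]` and `D = diag(ρ⁰, ρ⁻¹, …, ρ^{-(N-1)})`,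
`ρ > 1`. If `σv` lists the singular values of `X = J * D` in decreasing order
(`σv ⟨0⟩ = σ_1`, etc.), then `σ_j(X) ≤ √N ρ^{-j+2} / √(ρ² - 1)` for `2 ≤ j ≤ N`. -/
theorem chebyshev_vandermonde_singular_value_decay (N : ℕ) (hN : 0 < N)
    (ρ : ℝ) (hρ : 1 < ρ) (t : Fin N → ℝ) (ht : ∀ i, t i ∈ Set.Icc (-1 : ℝ) 1)
    (J D X : Matrix (Fin N) (Fin N) ℝ)
    (hJ : J = Matrix.of fun (i k : Fin N) => (Polynomial.Chebyshev.T ℝ ((k : ℕ) : ℤ)).eval (t i))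
    (hD : D = Matrix.diagonal fun k : Fin N => ρ ^ (-((k : ℕ) : ℤ)))
    (hX : X = J * D)
    (σv : Fin N → ℝ) (hσ_dec : Antitone σv)
    (hσ : ∃ (hH : (Xᵀ * X).IsHermitian) (e : Equiv.Perm (Fin N)),
      ∀ i, σv i = Real.sqrt (hH.eigenvalues (e i))) :
    ∀ j : Fin N, 1 ≤ (j : ℕ) →
      σv j ≤ Real.sqrt N * ρ ^ (1 - ((j : ℕ) : ℤ)) / Real.sqrt (ρ ^ 2 - 1) := by
  obtain ⟨hH, e, hσe⟩ := hσ
  intro j hj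
  have hρ0 : (0:ℝ) < ρ := lt_trans one_pos hρ
  have hρne : ρ ≠ 0 := ne_of_gt hρ0
  have hρinv0 : 0 < ρ⁻¹ := inv_pos.mpr hρ0
  have hρinv1 : ρ⁻¹ < 1 := inv_lt_one_of_one_lt₀ hρ
  -- PSD
  have hPSD : (Xᵀ * X).PosSemidef := by
    have := Matrix.posSemidef_conjTranspose_mul_self X
    rwa [Matrix.conjTranspose_eq_transpose_of_trivial] at this
  have hμ0 : ∀ i, 0 ≤ hH.eigenvalues i := fun i => hPSD.eigenvalues_nonneg i
  -- subspaces
  have hjN : ((j:ℕ)+1) ≤ N := j.isLt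
  set b := hH.eigenvectorBasis with hbdef
  set f : Fin ((j:ℕ)+1) → Fin N := fun i => e (Fin.castLE hjN i) with hfdef
  set g : Fin ((j:ℕ)+1) → EuclideanSpace ℝ (Fin N) := fun i => b (f i) with hgdef
  have hfinj : Function.Injective f := fun a a' h => Fin.castLE_injective hjN (e.injective h)
  have horth : Orthonormal ℝ g := b.orthonormal.comp f hfinj
  set U : Submodule ℝ (EuclideanSpace ℝ (Fin N)) := Submodule.span ℝ (Set.range g) with hUdef
  have hUrank : Module.finrank ℝ U = (j:ℕ)+1 := by
    rw [finrank_span_eq_card horth.linearIndependent]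
    simp
  set π : EuclideanSpace ℝ (Fin N) →ₗ[ℝ] (Fin (j:ℕ) → ℝ) :=
    { toFun := fun v i => v (Fin.castLE (le_of_lt j.isLt) i)
      map_add' := fun _ _ => rfl
      map_smul' := fun _ _ => rfl } with hπdef
  set W := LinearMap.ker π with hWdef
  have h1 : Module.finrank ℝ ↥(U ⊔ W) + Module.finrank ℝ ↥(U ⊓ W)
      = Module.finrank ℝ U + Module.finrank ℝ W :=
    Submodule.finrank_sup_add_finrank_inf_eq U W
  have h2 : Module.finrank ℝ ↥(U ⊔ W) ≤ N := by
    have := Submodule.finrank_le (U ⊔ W)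
    rwa [finrank_euclideanSpace_fin] at this
  have h3 : Module.finrank ℝ (LinearMap.range π) + Module.finrank ℝ W = N := by
    have := LinearMap.finrank_range_add_finrank_ker π
    rwa [finrank_euclideanSpace_fin] at this
  have h4 : Module.finrank ℝ (LinearMap.range π) ≤ (j:ℕ) := by
    have := Submodule.finrank_le (LinearMap.range π)
    simpa using this
  have hpos : 0 < Module.finrank ℝ ↥(U ⊓ W) := by omega
  obtain ⟨v, hv, hvne⟩ : ∃ v, v ∈ U ⊓ W ∧ v ≠ 0 := by
    refine Submodule.exists_mem_ne_zero_of_ne_bot fun hbot => ?_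
    rw [hbot] at hpos
    simp at hpos
  obtain ⟨c, hc⟩ := (Submodule.mem_span_range_iff_exists_fun ℝ).mp hv.1
  have hvW : ∀ k : Fin N, (k:ℕ) < (j:ℕ) → v k = 0 := by
    intro k hk
    have h0 : π v = 0 := hv.2
    have := congrFun h0 ⟨(k:ℕ), hk⟩
    exact this
  -- diagonalization of the quadratic form
  obtain ⟨hQeig, hvvc⟩ := quad_form_eig (Xᵀ*X) hH f hfinj g (by rw [hgdef, hbdef]) v c hc
  have hσvj0 : 0 ≤ σv j := by rw [hσe j]; exact Real.sqrt_nonneg _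
  -- lower bound
  have hlow : σv j^2 * (v ⬝ᵥ v) ≤ v ⬝ᵥ ((Xᵀ*X) *ᵥ v) := by
    rw [hQeig, hvvc, Finset.mul_sum]
    apply Finset.sum_le_sum
    intro i _
    have hle : σv j ≤ σv (Fin.castLE hjN i) := hσ_dec (by
      rw [Fin.le_def]
      simpa using Nat.lt_succ_iff.mp i.isLt)
    have hμeq : hH.eigenvalues (f i) = (σv (Fin.castLE hjN i))^2 := by
      rw [hσe, Real.sq_sqrt (hμ0 _)]
    rw [hμeq]
    exact mul_le_mul_of_nonneg_right (pow_le_pow_left₀ hσvj0 hle 2) (sq_nonneg (c i))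
  -- positivity of v ⬝ᵥ v
  have hvvpos : 0 < v ⬝ᵥ v := by
    rw [hvvc]
    by_cases hall : ∀ i, c i = 0
    · exfalso
      apply hvne
      rw [← hc]
      simp [hall]
    · push_neg at hall
      obtain ⟨i0, hi0⟩ := hall
      exact Finset.sum_pos' (fun i _ => sq_nonneg _) ⟨i0, Finset.mem_univ _, by positivity⟩
  -- upper bound
  set r : ℝ := ρ⁻¹^2 with hrdef
  have hr0 : 0 ≤ r := by positivity
  have hr1 : r < 1 := by
    rw [hrdef]
    exact pow_lt_one₀ (le_of_lt hρinv0) hρinv1 (by norm_num)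
  have hentry : ∀ i k, |X i k| ≤ (ρ⁻¹)^(k:ℕ) := by
    intro i k
    rw [hX, hD, Matrix.mul_diagonal, hJ]
    have hd : ρ ^ (-((k:ℕ):ℤ)) = (ρ⁻¹)^(k:ℕ) := by
      rw [_root_.zpow_neg, zpow_natCast, inv_pow]
    rw [abs_mul, hd, abs_of_nonneg (show (0:ℝ) ≤ (ρ⁻¹)^(k:ℕ) by positivity)]
    calc |Matrix.of (fun (i k : Fin N) => (Polynomial.Chebyshev.T ℝ ((k:ℕ):ℤ)).eval (t i)) i k|
          * (ρ⁻¹)^(k:ℕ)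
        ≤ 1 * (ρ⁻¹)^(k:ℕ) :=
          mul_le_mul_of_nonneg_right (cheb_abs_le _ _ (ht i)) (by positivity)
      _ = (ρ⁻¹)^(k:ℕ) := one_mul _
  have hup1 : v ⬝ᵥ ((Xᵀ*X) *ᵥ v) ≤ (N:ℝ)
      * (∑ k ∈ Finset.univ.filter (fun k : Fin N => (j:ℕ) ≤ (k:ℕ)), ((ρ⁻¹)^(k:ℕ))^2)
      * (v ⬝ᵥ v) :=
    quad_form_upper N (j:ℕ) X (fun k => (ρ⁻¹)^(k:ℕ)) hentry v hvW
  have hsum_r : ∑ k ∈ Finset.univ.filter (fun k : Fin N => (j:ℕ) ≤ (k:ℕ)), ((ρ⁻¹)^(k:ℕ))^2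
      ≤ r^(j:ℕ) / (1 - r) := by
    have hsq : ∀ k : Fin N, ((ρ⁻¹)^(k:ℕ))^2 = r^(k:ℕ) := by
      intro k
      rw [hrdef, ← pow_mul, ← pow_mul, Nat.mul_comm]
    calc ∑ k ∈ Finset.univ.filter (fun k : Fin N => (j:ℕ) ≤ (k:ℕ)), ((ρ⁻¹)^(k:ℕ))^2
        = ∑ k ∈ Finset.univ.filter (fun k : Fin N => (j:ℕ) ≤ (k:ℕ)), r^(k:ℕ) :=
          Finset.sum_congr rfl fun k _ => hsq k
      _ ≤ r^(j:ℕ) / (1 - r) := geom_tail_le_s11 N (j:ℕ) r hr0 hr1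
  have hkey : σv j^2 ≤ (N:ℝ) * (r^(j:ℕ) / (1 - r)) := by
    have hchain : σv j^2 * (v ⬝ᵥ v) ≤ (N:ℝ) * (r^(j:ℕ) / (1 - r)) * (v ⬝ᵥ v) := by
      refine le_trans hlow (le_trans hup1 ?_)
      apply mul_le_mul_of_nonneg_right _ (le_of_lt hvvpos)
      exact mul_le_mul_of_nonneg_left hsum_r (Nat.cast_nonneg N)
    exact le_of_mul_le_mul_right hchain hvvpos
  -- final arithmetic
  set q : ℝ := (ρ⁻¹)^(j:ℕ) with hqdef
  have hq0 : 0 ≤ q := by positivity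
  have hzpow : ρ^(1-((j:ℕ):ℤ)) = ρ * q := by
    rw [sub_eq_add_neg, zpow_add₀ hρne, zpow_one, _root_.zpow_neg, zpow_natCast, ← inv_pow]
  have hρ21 : 0 < ρ^2 - 1 := by nlinarith
  have h1r : 0 < 1 - r := by linarith
  have hrq : r^(j:ℕ) = q^2 := by
    rw [hrdef, hqdef, ← pow_mul, ← pow_mul, Nat.mul_comm]
  have hRHS0 : 0 ≤ Real.sqrt N * (ρ * q) / Real.sqrt (ρ^2 - 1) := by positivity
  have hBeq : (N:ℝ) * (r^(j:ℕ) / (1 - r)) = (Real.sqrt N * (ρ * q) / Real.sqrt (ρ^2 - 1))^2 := by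
    rw [div_pow, mul_pow, Real.sq_sqrt (Nat.cast_nonneg N), Real.sq_sqrt (le_of_lt hρ21), hrq]
    have h1rq : 1 - r = (ρ^2 - 1)/ρ^2 := by
      rw [hrdef]
      field_simp
    rw [h1rq, mul_pow]
    field_simp
  calc σv j = Real.sqrt (σv j^2) := (Real.sqrt_sq hσvj0).symm
    _ ≤ Real.sqrt ((Real.sqrt N * (ρ * q) / Real.sqrt (ρ^2 - 1))^2) :=
        Real.sqrt_le_sqrt (by rw [← hBeq]; exact hkey)
    _ = Real.sqrt N * (ρ * q) / Real.sqrt (ρ^2 - 1) := Real.sqrt_sq hRHS0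
    _ = Real.sqrt N * ρ^(1-((j:ℕ):ℤ)) / Real.sqrt (ρ^2 - 1) := by rw [hzpow]
end

section
/- Let V ∈ ℝ^{N×N} be the Vandermonde matrix V_{ij} = t_{i−1}^{j−1} with nodes t_0,...,t_{N−1} ∈ [−1,1], and D = diag(R^0, R^{-1}, ..., R^{-(N−1)}) with R > 1. Then for 2 ≤ j ≤ N, σ_j(VD) ≤ (√N / √(R² − 1)) · R^{−j+2}. -/
open Matrix Finset
set_option maxHeartbeats 1000000

/-- **Singular value decay of scaled Vandermonde matrices.** Let `V i k = t_i ^ k` be the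
Vandermonde matrix with nodes `t_i ∈ [-1, 1]` and `D = diag(R⁰, R⁻¹, …, R^{-(N-1)})`,
`R > 1`. If `σv` lists the singular values of `V * D` in decreasing order, then
`σ_j(V D) ≤ (√N / √(R² - 1)) R^{-j+2}` for `2 ≤ j ≤ N`. -/
theorem vandermonde_singular_value_decay (N : ℕ) (hN : 0 < N)
    (R : ℝ) (hR : 1 < R) (t : Fin N → ℝ) (ht : ∀ i, t i ∈ Set.Icc (-1 : ℝ) 1)
    (V D X : Matrix (Fin N) (Fin N) ℝ)
    (hV : V = Matrix.of fun (i k : Fin N) => t i ^ (k : ℕ))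
    (hD : D = Matrix.diagonal fun k : Fin N => R ^ (-((k : ℕ) : ℤ)))
    (hX : X = V * D)
    (σv : Fin N → ℝ) (hσ_dec : Antitone σv)
    (hσ : ∃ (hH : (Xᵀ * X).IsHermitian) (e : Equiv.Perm (Fin N)),
      ∀ i, σv i = Real.sqrt (hH.eigenvalues (e i))) :
    ∀ j : Fin N, 1 ≤ (j : ℕ) →
      σv j ≤ Real.sqrt N / Real.sqrt (R ^ 2 - 1) * R ^ (1 - ((j : ℕ) : ℤ)) := by
  classical
  intro j hj
  obtain ⟨hH, e, hσe⟩ := hσ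
  have hR0 : (0:ℝ) < R := lt_trans one_pos hR
  have hRne : (R:ℝ) ≠ 0 := ne_of_gt hR0
  have hR2 : (1:ℝ) < R ^ 2 := one_lt_pow₀ hR two_ne_zero
  have hR2sub : (0:ℝ) < R ^ 2 - 1 := by linarith
  set x : ℝ := (R ^ 2)⁻¹ with hxdef
  have hx0 : 0 < x := by positivity
  have hx1 : x < 1 := by
    rw [hxdef, inv_lt_one_iff₀]; right; exact hR2
  have hxne1 : x ≠ 1 := ne_of_lt hx1
  set jn := (j : ℕ) with hjn
  -- positive semidefiniteness
  have hPSD : (Xᵀ * X).PosSemidef := by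
    have h := Matrix.posSemidef_conjTranspose_mul_self X
    rwa [Matrix.conjTranspose_eq_transpose_of_trivial] at h
  have hμ0 : ∀ m, 0 ≤ hH.eigenvalues m := fun m => hPSD.eigenvalues_nonneg m
  set σ := hH.eigenvalues with hσdef
  set u := hH.eigenvectorBasis with hudef
  have hu : Orthonormal ℝ (⇑u) := u.orthonormal
  set g : Fin (jn + 1) → Fin N := fun i => e (Fin.castLE (by omega) i) with hg
  have hginj : Function.Injective g := fun a b hab =>
    Fin.castLE_injective _ (e.injective hab)
  have hf : Orthonormal ℝ (fun i => u (g i)) := hu.comp g hginj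
  set U : Submodule ℝ (EuclideanSpace ℝ (Fin N)) :=
    Submodule.span ℝ (Set.range fun i => (u (g i) : EuclideanSpace ℝ (Fin N))) with hU
  have hUrank : Module.finrank ℝ U = jn + 1 := by
    rw [hU, finrank_span_eq_card hf.linearIndependent, Fintype.card_fin]
  have hjN : jn ≤ N := j.isLt.le
  set L : EuclideanSpace ℝ (Fin N) →ₗ[ℝ] (Fin jn → ℝ) :=
    { toFun := fun v k => v (Fin.castLE hjN k)
      map_add' := fun a b => rfl
      map_smul' := fun c a => rfl } with hL
  have hWrank : N - jn ≤ Module.finrank ℝ (LinearMap.ker L) := by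
    have h1 := LinearMap.finrank_range_add_finrank_ker L
    have h2 : Module.finrank ℝ (LinearMap.range L) ≤ jn :=
      (Submodule.finrank_le _).trans
        (by rw [Module.finrank_fintype_fun_eq_card, Fintype.card_fin])
    have h3 : Module.finrank ℝ (EuclideanSpace ℝ (Fin N)) = N := by
      rw [finrank_euclideanSpace, Fintype.card_fin]
    omega
  have hclash : ¬ Disjoint U (LinearMap.ker L) := by
    intro hd
    have hle := Submodule.finrank_add_finrank_le_of_disjoint hd
    rw [hUrank] at hle
    have h3 : Module.finrank ℝ (EuclideanSpace ℝ (Fin N)) = N := by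
      rw [finrank_euclideanSpace, Fintype.card_fin]
    have : jn < N := j.isLt
    omega
  obtain ⟨v, hv, hv0⟩ : ∃ v : EuclideanSpace ℝ (Fin N),
      v ∈ U ⊓ LinearMap.ker L ∧ v ≠ 0 :=
    Submodule.exists_mem_ne_zero_of_ne_bot fun h => hclash (disjoint_iff.2 h)
  obtain ⟨c, hc⟩ : ∃ c : Fin (jn + 1) → ℝ,
      ∑ i, c i • (u (g i) : EuclideanSpace ℝ (Fin N)) = v :=
    (Submodule.mem_span_range_iff_exists_fun ℝ).1 hv.1
  have hvz : ∀ k : Fin N, (k : ℕ) < jn → v k = 0 := by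
    intro k hk
    have h : L v = 0 := hv.2
    have := congrFun h ⟨(k : ℕ), hk⟩
    change v (Fin.castLE hjN ⟨(k : ℕ), hk⟩) = 0 at this
    exact this
  -- the linear map associated to A
  set T := Matrix.toEuclideanLin (Xᵀ * X) with hT
  have hTu : ∀ m, T (u m) = σ m • (u m) := fun m =>
    congrArg (WithLp.equiv 2 (Fin N → ℝ)).symm (hH.mulVec_eigenvectorBasis m)
  have hTv : T v = ∑ i, (σ (g i) * c i) • (u (g i) : EuclideanSpace ℝ (Fin N)) := by
    rw [← hc, map_sum]
    refine Finset.sum_congr rfl fun i _ => ?_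
    rw [_root_.map_smul, hTu, smul_smul, mul_comm]
  have hQ : (@inner ℝ _ _ v (T v)) = ∑ i, c i * (σ (g i) * c i) := by
    rw [hTv, ← hc]
    simpa using hf.inner_sum c (fun i => σ (g i) * c i) Finset.univ
  have hS : (@inner ℝ _ _ v v) = ∑ i, c i * c i := by
    rw [← hc]
    simpa using hf.inner_sum c c Finset.univ
  have hle : ∀ i : Fin (jn+1), Fin.castLE (by omega : jn + 1 ≤ N) i ≤ j := by
    intro i
    have := i.isLt
    simp only [Fin.le_def, Fin.coe_castLE]
    omega
  have h1 : ∀ i : Fin (jn+1), σ (e j) ≤ σ (g i) := by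
    intro i
    have h2 := hσ_dec (hle i)
    have h3 : (0:ℝ) ≤ σv j := by rw [hσe]; exact Real.sqrt_nonneg _
    have h4 : σv j ^ 2 ≤ σv (Fin.castLE (by omega) i) ^ 2 := by nlinarith
    rw [hσe, hσe, Real.sq_sqrt (hμ0 _), Real.sq_sqrt (hμ0 _)] at h4
    exact h4
  have hQlow : σ (e j) * (@inner ℝ _ _ v v) ≤ (@inner ℝ _ _ v (T v)) := by
    rw [hQ, hS, Finset.mul_sum]
    refine Finset.sum_le_sum fun i _ => ?_
    nlinarith [h1 i, sq_nonneg (c i), hμ0 (e j)]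
  -- upper bound via the structure of X
  have hXik : ∀ (i k : Fin N), X i k = t i ^ (k:ℕ) * R ^ (-((k:ℕ):ℤ)) := by
    intro i k
    rw [hX, hV, hD, Matrix.mul_diagonal]
    rfl
  have hpow2 : ∀ k : ℕ, (R ^ (-(k:ℤ))) ^ 2 = x ^ k := by
    intro k
    rw [_root_.zpow_neg, zpow_natCast, ← inv_pow, ← pow_right_comm, hxdef, inv_pow]
  set s : ℝ := ∑ k : Fin N, (if jn ≤ (k:ℕ) then x ^ (k:ℕ) else 0) with hs
  have hQup : (@inner ℝ _ _ v (T v)) ≤ (N * s) * (@inner ℝ _ _ v v) := by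
    have hinner : (@inner ℝ _ _ v (T v)) = ((X *ᵥ (v : Fin N → ℝ)) ⬝ᵥ (X *ᵥ (v : Fin N → ℝ))) := by
      have h0 : (@inner ℝ _ _ v (T v)) = (v : Fin N → ℝ) ⬝ᵥ ((Xᵀ * X) *ᵥ (v : Fin N → ℝ)) := by
        rw [EuclideanSpace.inner_eq_star_dotProduct, dotProduct_comm]; rfl
      rw [h0, ← Matrix.mulVec_mulVec, Matrix.dotProduct_mulVec, Matrix.vecMul_transpose]
    have hSv : (@inner ℝ _ _ v v) = ∑ k : Fin N, v k ^ 2 := by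
      simp only [PiLp.inner_apply, RCLike.inner_apply, conj_trivial, pow_two]
    rw [hinner, hSv]
    have hrow : ∀ i : Fin N, (X *ᵥ (v : Fin N → ℝ)) i ^ 2 ≤ s * ∑ k : Fin N, v k ^ 2 := by
      intro i
      have hwi : (X *ᵥ (v : Fin N → ℝ)) i
          = ∑ k : Fin N, (if jn ≤ (k:ℕ) then X i k else 0) * v k := by
        simp only [Matrix.mulVec, dotProduct]
        refine Finset.sum_congr rfl fun k _ => ?_
        by_cases hk : jn ≤ (k : ℕ)
        · rw [if_pos hk]
        · rw [if_neg hk, hvz k (by omega), mul_zero, mul_zero]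
      rw [hwi]
      calc (∑ k : Fin N, (if jn ≤ (k:ℕ) then X i k else 0) * v k) ^ 2
          ≤ (∑ k : Fin N, (if jn ≤ (k:ℕ) then X i k else 0) ^ 2) * ∑ k : Fin N, v k ^ 2 :=
            Finset.sum_mul_sq_le_sq_mul_sq _ _ _
        _ ≤ s * ∑ k : Fin N, v k ^ 2 := by
            refine mul_le_mul_of_nonneg_right ?_ (by positivity)
            rw [hs]
            refine Finset.sum_le_sum fun k _ => ?_
            by_cases hk : jn ≤ (k : ℕ)
            · rw [if_pos hk, if_pos hk, hXik, mul_pow, hpow2]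
              have ht1 : (t i ^ (k:ℕ)) ^ 2 ≤ 1 := by
                have h1 := (ht i).1
                have h2 := (ht i).2
                have : t i ^ 2 ≤ 1 := by nlinarith
                calc (t i ^ (k:ℕ)) ^ 2 = (t i ^ 2) ^ (k:ℕ) := by
                      rw [← pow_mul, ← pow_mul, mul_comm]
                  _ ≤ 1 ^ (k:ℕ) := pow_le_pow_left₀ (sq_nonneg _) this _
                  _ = 1 := one_pow _
              nlinarith [pow_pos hx0 (k:ℕ), pow_nonneg (le_of_lt hx0) (k:ℕ)]
            · rw [if_neg hk, if_neg hk]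
              norm_num
    calc (X *ᵥ (v : Fin N → ℝ)) ⬝ᵥ (X *ᵥ (v : Fin N → ℝ))
        = ∑ i : Fin N, (X *ᵥ (v : Fin N → ℝ)) i ^ 2 := by
          simp [dotProduct, pow_two]
      _ ≤ ∑ _i : Fin N, s * ∑ k : Fin N, v k ^ 2 := Finset.sum_le_sum fun i _ => hrow i
      _ = (N * s) * ∑ k : Fin N, v k ^ 2 := by
          rw [Finset.sum_const, Finset.card_univ, Fintype.card_fin, nsmul_eq_mul]
          ring
  -- combine
  have hSpos : (0:ℝ) < (@inner ℝ _ _ v v) := by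
    rcases lt_or_eq_of_le (real_inner_self_nonneg (x := v)) with h | h
    · exact h
    · exact absurd ((inner_self_eq_zero (𝕜 := ℝ)).1 h.symm) hv0
  have hkey : σ (e j) ≤ N * s :=
    le_of_mul_le_mul_right (le_trans hQlow hQup) hSpos
  -- bound s
  have hsle : s ≤ x ^ jn / (1 - x) := by
    have h1 : s = ∑ k ∈ Finset.Ico jn N, x ^ k := by
      rw [hs, Fin.sum_univ_eq_sum_range (fun k => if jn ≤ k then x ^ k else 0) N,
        ← Finset.sum_filter]
      congr 1
      ext a
      simp [Finset.mem_filter, Finset.mem_range, Finset.mem_Ico, and_comm]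
    rw [h1, geom_sum_Ico' hxne1 hjN]
    have hxN : (0:ℝ) ≤ x ^ N := by positivity
    have h1x : (0:ℝ) < 1 - x := by linarith
    exact (div_le_div_iff_of_pos_right h1x).2 (by linarith)
  have hμle : σ (e j) ≤ (N:ℝ) * (x ^ jn / (1 - x)) :=
    hkey.trans (mul_le_mul_of_nonneg_left hsle (Nat.cast_nonneg N))
  have hβ : ((R:ℝ) ^ ((1:ℤ) - (jn:ℤ))) ^ 2 = R ^ 2 * x ^ jn := by
    have e1 : ((R:ℝ) ^ ((1:ℤ) - (jn:ℤ))) ^ 2 = R ^ (((1:ℤ) - jn) + ((1:ℤ) - jn)) := by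
      rw [zpow_add₀ hRne, pow_two]
    have e2 : ((1:ℤ) - jn) + ((1:ℤ) - jn) = (2:ℤ) - ((2*jn:ℕ):ℤ) := by push_cast; ring
    rw [e1, e2, zpow_sub₀ hRne, hxdef, zpow_natCast, pow_mul]
    rw [show ((2:ℤ)) = ((2:ℕ):ℤ) by norm_num, zpow_natCast]
    rw [div_eq_mul_inv, inv_pow]
  have hceq : (N:ℝ) * (x ^ jn / (1 - x))
      = (N:ℝ)/(R^2-1) * ((R:ℝ)^((1:ℤ)-(jn:ℤ)))^2 := by
    rw [hβ, hxdef]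
    rw [show (1 - (R^2)⁻¹ : ℝ) = (R^2-1)/R^2 by field_simp]
    field_simp
  have hRHS0 : (0:ℝ) ≤ Real.sqrt N / Real.sqrt (R^2-1) * R ^ ((1:ℤ)-(jn:ℤ)) := by positivity
  have hRHSsq : (Real.sqrt N / Real.sqrt (R^2-1) * R ^ ((1:ℤ)-(jn:ℤ)))^2
      = (N:ℝ)/(R^2-1) * ((R:ℝ)^((1:ℤ)-(jn:ℤ)))^2 := by
    rw [mul_pow, div_pow, Real.sq_sqrt (Nat.cast_nonneg N), Real.sq_sqrt (le_of_lt hR2sub)]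
  have hfinal : σ (e j) ≤ (Real.sqrt N / Real.sqrt (R^2-1) * R ^ ((1:ℤ)-(jn:ℤ)))^2 := by
    rw [hRHSsq, ← hceq]; exact hμle
  calc σv j = Real.sqrt (σ (e j)) := hσe j
    _ ≤ Real.sqrt ((Real.sqrt N / Real.sqrt (R^2-1) * R ^ ((1:ℤ)-(jn:ℤ)))^2) :=
        Real.sqrt_le_sqrt hfinal
    _ = Real.sqrt N / Real.sqrt (R^2-1) * R ^ ((1:ℤ)-(jn:ℤ)) := Real.sqrt_sq hRHS0
end

section
/- Let X = [X_{B^0} | X_{B^1} | ... | X_{B^{N−1}}] be the n×n matrix (n = N(N+1)/2) whose j-th block consists of j+1 columns X_{B^j} = ρ^{−j}[T_0(t⃗)∘T_j(s⃗) | T_1(t⃗)∘T_{j−1}(s⃗) | ... | T_j(t⃗)∘T_0(s⃗)], where t⃗, s⃗ ∈ [−1,1]^n and ∘ denotes entrywise product, with ρ > 1. Then for 2 ≤ j ≤ n, σ_j(X) ≤ (3√C₂/2) · n · ρ^{−⌊√(8(j−1)+1)/2 − 1/2⌋}, where C₂ = (1 + ρ^{-2} + ρ^{-4})/(1 − ρ^{-2})³.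 -/
open Matrix

lemma spectral_key {n : ℕ} (X : Matrix (Fin n) (Fin n) ℝ)
    (hH : (Xᵀ * X).IsHermitian) (S T : Finset (Fin n)) (cc : ℝ)
    (hcard : T.card < S.card)
    (hev : ∀ i ∈ S, cc ^ 2 < hH.eigenvalues i)
    (hF : ∑ r, ∑ c ∈ Tᶜ, X r c ^ 2 ≤ cc ^ 2) : False := by
  classical
  let b : OrthonormalBasis (Fin n) ℝ (EuclideanSpace ℝ (Fin n)) := hH.eigenvectorBasis
  let β : OrthonormalBasis (Fin n) ℝ (EuclideanSpace ℝ (Fin n)) :=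
    EuclideanSpace.basisFun (Fin n) ℝ
  let V : Submodule ℝ (EuclideanSpace ℝ (Fin n)) :=
    Submodule.span ℝ (Set.range (⇑b ∘ (Subtype.val : S → Fin n)))
  let W : Submodule ℝ (EuclideanSpace ℝ (Fin n)) :=
    Submodule.span ℝ (Set.range (⇑β ∘ (Subtype.val : (Tᶜ : Finset (Fin n)) → Fin n)))
  have hVrank : Module.finrank ℝ V = S.card := by
    rw [finrank_span_eq_card ((b.orthonormal.linearIndependent).comp _ Subtype.val_injective)]
    simp
  have hWrank : Module.finrank ℝ W = n - T.card := by
    rw [finrank_span_eq_card ((β.orthonormal.linearIndependent).comp _ Subtype.val_injective)]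
    simp [Finset.card_compl]
  have hTn : T.card ≤ n := by simpa using T.card_le_univ
  have hsup : Module.finrank ℝ ↥(V ⊔ W) ≤ n := by
    have h1 := Submodule.finrank_le (V ⊔ W)
    simpa using h1
  have hkey := Submodule.finrank_sup_add_finrank_inf_eq V W
  have hpos : 0 < Module.finrank ℝ ↥(V ⊓ W) := by omega
  have hne : (V ⊓ W) ≠ ⊥ := by
    intro h; rw [h] at hpos; simp at hpos
  obtain ⟨v, hvmem, hv0⟩ := (Submodule.ne_bot_iff _).mp hne
  have hvV : v ∈ V := hvmem.1
  have hvW : v ∈ W := hvmem.2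
  -- coordinates of vectors in W vanish on T
  have hW0 : ∀ w ∈ W, ∀ c ∈ T, w c = 0 := by
    intro w hw
    induction hw using Submodule.span_induction with
    | mem x hx =>
      intro c hc
      obtain ⟨⟨i, hi⟩, rfl⟩ := hx
      have hci : c ≠ i := by
        rintro rfl; exact (Finset.mem_compl.mp hi) hc
      simp [β, EuclideanSpace.basisFun_apply, EuclideanSpace.single_apply, hci]
    | zero => intro c hc; simp
    | add x y hx hy ihx ihy =>
      intro c hc
      have := ihx c hc; have := ihy c hc
      simp [PiLp.add_apply, *]
    | smul a x hx ih =>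
      intro c hc
      simp [PiLp.smul_apply, ih c hc]
  have hvT : ∀ c ∈ T, v c = 0 := hW0 v hvW
  -- inner products of vectors in V with off-S eigenvectors vanish
  have hV0 : ∀ w ∈ V, ∀ i, i ∉ S → (inner ℝ (b i) w : ℝ) = 0 := by
    intro w hw
    induction hw using Submodule.span_induction with
    | mem x hx =>
      intro i hi
      obtain ⟨⟨i', hi'⟩, rfl⟩ := hx
      have : i ≠ i' := by rintro rfl; exact hi hi'
      exact b.orthonormal.2 this
    | zero => intro i hi; simp
    | add x y hx hy ihx ihy => intro i hi; rw [inner_add_right, ihx i hi, ihy i hi]; ring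
    | smul a x hx ih => intro i hi; rw [inner_smul_right, ih i hi]; ring
  set a : Fin n → ℝ := fun i => b.repr v i with ha
  have haS : ∀ i, i ∉ S → a i = 0 := by
    intro i hi
    rw [ha]; simp only []
    rw [b.repr_apply_apply]
    exact hV0 v hvV i hi
  -- Parseval
  have hnormsq : ∀ x : EuclideanSpace ℝ (Fin n), ‖x‖ ^ 2 = ∑ c, x c ^ 2 := by
    intro x
    rw [EuclideanSpace.norm_eq, Real.sq_sqrt (by positivity)]
    simp [Real.norm_eq_abs, sq_abs]
  have hP : ∑ i, a i ^ 2 = ∑ c, v c ^ 2 := by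
    have h1 : ‖b.repr v‖ = ‖v‖ := b.repr.norm_map v
    have h2 := hnormsq (b.repr v)
    have h3 := hnormsq v
    rw [h1, h3] at h2
    exact h2.symm
  -- coordinates of v along eigenvectors
  have hbv : ∀ i, ∑ r, b i r * v r = a i := by
    intro i
    have h := (b.repr_apply_apply v i).symm
    rw [PiLp.inner_apply] at h
    simpa [RCLike.inner_apply, mul_comm] using h
  have hv_fun : ∀ k, v k = ∑ i, a i * b i k := by
    intro k
    have h := congrArg (PiLp.projₗ (𝕜 := ℝ) (p := 2) (β := fun _ : Fin n => ℝ) k) (b.sum_repr v)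
    rw [map_sum] at h
    simpa [PiLp.projₗ, mul_comm] using h.symm
  -- eigen-equation coordinatewise
  have hHb : ∀ i r, ∑ c, (Xᵀ * X) r c * b i c = hH.eigenvalues i * b i r := by
    intro i r
    have h := congrFun (hH.mulVec_eigenvectorBasis i) r
    simpa [Matrix.mulVec, dotProduct] using h
  -- quadratic form identity
  have key1 : (X *ᵥ v) ⬝ᵥ (X *ᵥ v) = ∑ i, hH.eigenvalues i * a i ^ 2 := by
    have e0 : (X *ᵥ v) ⬝ᵥ (X *ᵥ v) = v ⬝ᵥ ((Xᵀ * X) *ᵥ v) := by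
      rw [← mulVec_mulVec, Matrix.dotProduct_mulVec v Xᵀ (X *ᵥ v), vecMul_transpose]
    rw [e0]
    have e1 : ∀ r, ((Xᵀ * X) *ᵥ v) r = ∑ i, a i * (hH.eigenvalues i * b i r) := by
      intro r
      have : ((Xᵀ * X) *ᵥ v) r = ∑ c, (Xᵀ * X) r c * v c := rfl
      rw [this]
      calc ∑ c, (Xᵀ * X) r c * v c
          = ∑ c, ∑ i, a i * ((Xᵀ * X) r c * b i c) := by
            apply Finset.sum_congr rfl
            intro c _
            rw [hv_fun c, Finset.mul_sum]
            apply Finset.sum_congr rfl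
            intro i _
            ring
        _ = ∑ i, ∑ c, a i * ((Xᵀ * X) r c * b i c) := Finset.sum_comm
        _ = ∑ i, a i * (hH.eigenvalues i * b i r) := by
            apply Finset.sum_congr rfl
            intro i _
            rw [← Finset.mul_sum, hHb i r]
    calc v ⬝ᵥ ((Xᵀ * X) *ᵥ v) = ∑ r, v r * ∑ i, a i * (hH.eigenvalues i * b i r) := by
          apply Finset.sum_congr rfl
          intro r _
          rw [e1 r]
      _ = ∑ i, ∑ r, (hH.eigenvalues i * a i) * (b i r * v r) := by
          rw [Finset.sum_comm]
          apply Finset.sum_congr rfl; intro r _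
          rw [Finset.mul_sum]
          apply Finset.sum_congr rfl; intro i _
          ring
      _ = ∑ i, hH.eigenvalues i * a i ^ 2 := by
          apply Finset.sum_congr rfl; intro i _
          rw [← Finset.mul_sum, hbv i]
          ring
  -- positivity of the norm of v
  have hPpos : 0 < ∑ c, v c ^ 2 := by
    rcases (Finset.sum_nonneg (fun c _ => sq_nonneg (v c))).lt_or_eq with h | h
    · exact h
    · exfalso
      apply hv0
      have hall := (Finset.sum_eq_zero_iff_of_nonneg (fun c _ => sq_nonneg (v c))).mp h.symm
      ext c
      have := hall c (Finset.mem_univ c)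
      simpa using pow_eq_zero_iff (n := 2) (by norm_num) |>.mp this
  have hParseval : ∑ i ∈ S, a i ^ 2 = ∑ c, v c ^ 2 := by
    rw [← hP]
    symm
    apply (Finset.sum_subset S.subset_univ _).symm
    intro i _ hi
    rw [haS i hi]
    ring
  obtain ⟨i0, hi0S, hi0⟩ : ∃ i ∈ S, a i ≠ 0 := by
    by_contra h
    push_neg at h
    have : ∑ i ∈ S, a i ^ 2 = 0 := Finset.sum_eq_zero fun i hi => by rw [h i hi]; ring
    rw [hParseval] at this
    exact absurd this hPpos.ne'
  have hlow : cc ^ 2 * (∑ c, v c ^ 2) < (X *ᵥ v) ⬝ᵥ (X *ᵥ v) := by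
    rw [key1, ← hParseval, Finset.mul_sum]
    have e2 : ∑ i, hH.eigenvalues i * a i ^ 2 = ∑ i ∈ S, hH.eigenvalues i * a i ^ 2 := by
      apply (Finset.sum_subset S.subset_univ _).symm
      intro i _ hi
      rw [haS i hi]
      ring
    rw [e2]
    apply Finset.sum_lt_sum
    · intro i hi
      exact mul_le_mul_of_nonneg_right (hev i hi).le (sq_nonneg _)
    · refine ⟨i0, hi0S, ?_⟩
      have h2 : 0 < a i0 ^ 2 := lt_of_le_of_ne (sq_nonneg _) (Ne.symm (pow_ne_zero 2 hi0))
      exact mul_lt_mul_of_pos_right (hev i0 hi0S) h2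
  have hup : (X *ᵥ v) ⬝ᵥ (X *ᵥ v) ≤ cc ^ 2 * (∑ c, v c ^ 2) := by
    have e3 : ∀ r, (X *ᵥ v) r = ∑ c ∈ Tᶜ, X r c * v c := by
      intro r
      have : (X *ᵥ v) r = ∑ c, X r c * v c := rfl
      rw [this]
      symm
      apply Finset.sum_subset (Finset.subset_univ _)
      intro c _ hc
      rw [hvT c (by simpa using hc)]
      ring
    calc (X *ᵥ v) ⬝ᵥ (X *ᵥ v) = ∑ r, (∑ c ∈ Tᶜ, X r c * v c) ^ 2 := by
          apply Finset.sum_congr rfl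
          intro r _
          rw [← e3 r]
          ring
      _ ≤ ∑ r, (∑ c ∈ Tᶜ, X r c ^ 2) * (∑ c ∈ Tᶜ, v c ^ 2) := by
          apply Finset.sum_le_sum
          intro r _
          exact Finset.sum_mul_sq_le_sq_mul_sq _ _ _
      _ ≤ ∑ r, (∑ c ∈ Tᶜ, X r c ^ 2) * (∑ c, v c ^ 2) := by
          apply Finset.sum_le_sum
          intro r _
          apply mul_le_mul_of_nonneg_left _ (Finset.sum_nonneg fun c _ => sq_nonneg _)
          exact Finset.sum_le_sum_of_subset_of_nonneg (Finset.subset_univ _)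
            (fun c _ _ => sq_nonneg _)
      _ = (∑ r, ∑ c ∈ Tᶜ, X r c ^ 2) * (∑ c, v c ^ 2) := by rw [Finset.sum_mul]
      _ ≤ cc ^ 2 * (∑ c, v c ^ 2) :=
          mul_le_mul_of_nonneg_right hF (Finset.sum_nonneg fun c _ => sq_nonneg _)
  exact absurd (hlow.trans_le hup) (lt_irrefl _)

lemma cheb_bound (m : ℤ) (x : ℝ) (hx : x ∈ Set.Icc (-1:ℝ) 1) :
    |(Polynomial.Chebyshev.T ℝ m).eval x| ≤ 1 := by
  obtain ⟨h1, h2⟩ := hx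
  have hxx : x = Real.cos (Real.arccos x) := (Real.cos_arccos h1 h2).symm
  rw [hxx, Polynomial.Chebyshev.T_real_cos]
  exact Real.abs_cos_le_one _


lemma gauss_sum_succ (K : ℕ) : (∑ m ∈ Finset.range K, (m+1)) * 2 = K * (K+1) := by
  have h1 := Finset.sum_range_id_mul_two (K+1)
  have h2 : ∑ i ∈ Finset.range (K+1), i = ∑ m ∈ Finset.range K, (m+1) := by
    rw [Finset.sum_range_succ' (fun i => i) K]
    simp
  rw [← h2, h1]
  simp [Nat.add_sub_cancel, Nat.mul_comm]


/-- **Singular value decay of the 2D scaled Chebyshev design matrix.** Let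
`n = N(N+1)/2` and let `X` be the `n × n` matrix whose columns, enumerated by a bijection
`col` onto the pairs `(a, b)` with `a + b ≤ N - 1` (the `j`-th block consisting of the
`j + 1` columns with `a + b = j`), are `ρ^{-(a+b)} T_a(t⃗) ∘ T_b(s⃗)` (entrywise product),
with `t⃗, s⃗ ∈ [-1,1]ⁿ` and `ρ > 1`. If `σv` lists the singular values of `X` in
decreasing order, then for `2 ≤ j ≤ n`,
`σ_j(X) ≤ (3 √C₂ / 2) n ρ^{-⌊√(8(j-1)+1)/2 - 1/2⌋}` where
`C₂ = (1 + ρ⁻² + ρ⁻⁴)/(1 - ρ⁻²)³`. -/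
theorem cheb2d_design_matrix_singular_value_decay (N n : ℕ) (hN : 1 ≤ N)
    (hn : n = N * (N + 1) / 2) (ρ : ℝ) (hρ : 1 < ρ)
    (t s : Fin n → ℝ) (ht : ∀ i, t i ∈ Set.Icc (-1 : ℝ) 1)
    (hs : ∀ i, s i ∈ Set.Icc (-1 : ℝ) 1)
    (col : Fin n → ℕ × ℕ)
    (hcol : Set.BijOn col Set.univ {p : ℕ × ℕ | p.1 + p.2 ≤ N - 1})
    (X : Matrix (Fin n) (Fin n) ℝ)
    (hX : X = Matrix.of fun (i c : Fin n) =>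
      ρ ^ (-(((col c).1 : ℤ) + (col c).2)) *
        ((Polynomial.Chebyshev.T ℝ ((col c).1 : ℤ)).eval (t i) *
          (Polynomial.Chebyshev.T ℝ ((col c).2 : ℤ)).eval (s i)))
    (σv : Fin n → ℝ) (hσ_dec : Antitone σv)
    (hσ : ∃ (hH : (Xᵀ * X).IsHermitian) (e : Equiv.Perm (Fin n)),
      ∀ i, σv i = Real.sqrt (hH.eigenvalues (e i)))
    (C₂ : ℝ) (hC₂ : C₂ = (1 + ρ ^ (-2 : ℤ) + ρ ^ (-4 : ℤ)) / (1 - ρ ^ (-2 : ℤ)) ^ 3) :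
    ∀ j : Fin n, 1 ≤ (j : ℕ) →
      σv j ≤ 3 * Real.sqrt C₂ / 2 * n *
        ρ ^ (-⌊Real.sqrt (8 * ((j : ℕ) : ℝ) + 1) / 2 - 1 / 2⌋) := by
  intro j hj
  classical
  obtain ⟨hH, e, hσe⟩ := hσ
  set k : ℤ := ⌊Real.sqrt (8 * ((j:ℕ):ℝ) + 1) / 2 - 1/2⌋ with hk
  have hρ0 : (0:ℝ) < ρ := lt_trans one_pos hρ
  have h9 : (3:ℝ) ≤ Real.sqrt (8 * ((j:ℕ):ℝ) + 1) := by
    have h1 : (1:ℝ) ≤ ((j:ℕ):ℝ) := by exact_mod_cast hj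
    have h2 : (9:ℝ) ≤ 8 * ((j:ℕ):ℝ) + 1 := by linarith
    calc (3:ℝ) = Real.sqrt 9 := by
          rw [show (9:ℝ) = 3^2 by norm_num, Real.sqrt_sq (by norm_num)]
      _ ≤ _ := Real.sqrt_le_sqrt h2
  have hk1 : 1 ≤ k := by
    rw [hk]
    apply Int.le_floor.mpr
    push_cast
    linarith
  set K : ℕ := k.toNat with hK
  have hKk : (K:ℤ) = k := Int.toNat_of_nonneg (by omega)
  have hKj : K * (K + 1) ≤ 2 * (j:ℕ) := by
    have h1 : (k:ℝ) ≤ Real.sqrt (8 * ((j:ℕ):ℝ) + 1) / 2 - 1/2 := by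
      rw [hk]; exact Int.floor_le _
    have h2 : 2*(k:ℝ)+1 ≤ Real.sqrt (8 * ((j:ℕ):ℝ) + 1) := by linarith
    have hnn : (0:ℝ) ≤ 2*(k:ℝ)+1 := by
      have : (1:ℝ) ≤ (k:ℝ) := by exact_mod_cast hk1
      linarith
    have h3 : (2*(k:ℝ)+1)^2 ≤ 8 * ((j:ℕ):ℝ) + 1 := by
      nlinarith [Real.sq_sqrt (show (0:ℝ) ≤ 8 * ((j:ℕ):ℝ) + 1 by positivity)]
    have hKr : ((K:ℕ):ℝ) = (k:ℝ) := by exact_mod_cast congrArg (Int.cast : ℤ → ℝ) hKk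
    have h4 : ((K:ℕ):ℝ) * (((K:ℕ):ℝ) + 1) ≤ 2 * ((j:ℕ):ℝ) := by nlinarith
    exact_mod_cast h4
  -- the set of retained columns
  set T : Finset (Fin n) := Finset.univ.filter (fun c => (col c).1 + (col c).2 < K) with hT
  have hTcard : T.card ≤ (j:ℕ) := by
    have hinj : Set.InjOn col T := fun x _ y _ h =>
      hcol.injOn (Set.mem_univ x) (Set.mem_univ y) h
    rw [← Finset.card_image_of_injOn hinj]
    have hsub : T.image col ⊆ (Finset.range K).biUnion (fun m => Finset.HasAntidiagonal.antidiagonal m) := by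
      intro p hp
      obtain ⟨c, hc, rfl⟩ := Finset.mem_image.mp hp
      have hlt : (col c).1 + (col c).2 < K := (Finset.mem_filter.mp hc).2
      simp only [Finset.mem_biUnion, Finset.mem_range, Finset.HasAntidiagonal.mem_antidiagonal]
      exact ⟨_, hlt, rfl⟩
    refine le_trans (Finset.card_le_card hsub) (le_trans Finset.card_biUnion_le ?_)
    have h5 : ∑ m ∈ Finset.range K, (Finset.HasAntidiagonal.antidiagonal m).card
        = ∑ m ∈ Finset.range K, (m+1) := by
      simp [Finset.Nat.card_antidiagonal]
    rw [h5]
    have := gauss_sum_succ K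
    omega
  -- constants
  have hq0 : (0:ℝ) < ρ ^ (-2:ℤ) := zpow_pos hρ0 _
  have hq1 : ρ ^ (-2:ℤ) < 1 := by
    rw [_root_.zpow_neg]
    apply inv_lt_one_of_one_lt₀
    have : (1:ℝ) < ρ ^ (2:ℕ) := one_lt_pow₀ hρ (by norm_num)
    exact_mod_cast this
  have hC₂1 : (1:ℝ) ≤ C₂ := by
    rw [hC₂]
    have hd0 : (0:ℝ) < (1 - ρ ^ (-2:ℤ))^3 := pow_pos (by linarith) 3
    rw [le_div_iff₀ hd0]
    have hq40 : (0:ℝ) < ρ ^ (-4:ℤ) := zpow_pos hρ0 _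
    nlinarith [pow_lt_one₀ (by linarith : (0:ℝ) ≤ 1 - ρ ^ (-2:ℤ)) (by linarith) (n := 3) (by norm_num)]
  have hC₂0 : (0:ℝ) ≤ C₂ := le_trans zero_le_one hC₂1
  set cb : ℝ := 3 * Real.sqrt C₂ / 2 * n * ρ ^ (-k) with hcb
  by_contra hcon
  push_neg at hcon
  have hcb0 : (0:ℝ) ≤ cb := by
    rw [hcb]
    have := Real.sqrt_nonneg C₂
    have := zpow_pos hρ0 (-k)
    positivity
  set S : Finset (Fin n) := (Finset.Iic j).image e with hS
  have hScard : S.card = (j:ℕ) + 1 := by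
    rw [hS, Finset.card_image_of_injective _ e.injective, Fin.card_Iic]
  have hev : ∀ i ∈ S, cb^2 < hH.eigenvalues i := by
    intro i hi
    obtain ⟨i', hi', rfl⟩ := Finset.mem_image.mp hi
    have h1 : cb < σv i' := lt_of_lt_of_le hcon (hσ_dec (Finset.mem_Iic.mp hi'))
    rw [hσe i'] at h1
    have h2 : 0 < hH.eigenvalues (e i') := Real.sqrt_pos.mp (lt_of_le_of_lt hcb0 h1)
    calc cb^2 < (Real.sqrt (hH.eigenvalues (e i')))^2 :=
          pow_lt_pow_left₀ h1 hcb0 (by norm_num)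
      _ = _ := Real.sq_sqrt h2.le
  have hentry : ∀ r c', c' ∈ Tᶜ → X r c' ^ 2 ≤ (ρ^(-k))^2 := by
    intro r c' hc'
    have hm : K ≤ (col c').1 + (col c').2 := by
      have := Finset.mem_compl.mp hc'
      rw [hT] at this
      simp only [Finset.mem_filter, Finset.mem_univ, true_and, not_lt] at this
      exact this
    have habs : |X r c'| ≤ ρ ^ (-(((col c').1:ℤ) + (col c').2)) := by
      rw [hX]
      simp only [Matrix.of_apply]
      rw [abs_mul, abs_mul]
      have h1 : |ρ ^ (-(((col c').1:ℤ) + (col c').2))| = ρ ^ (-(((col c').1:ℤ) + (col c').2)) :=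
        abs_of_pos (zpow_pos hρ0 _)
      rw [h1]
      have c1 := cheb_bound ((col c').1:ℤ) (t r) (ht r)
      have c2 := cheb_bound ((col c').2:ℤ) (s r) (hs r)
      have hz := (zpow_pos hρ0 (-(((col c').1:ℤ) + (col c').2))).le
      calc ρ ^ (-(((col c').1:ℤ) + (col c').2)) *
            (|(Polynomial.Chebyshev.T ℝ ((col c').1:ℤ)).eval (t r)| *
              |(Polynomial.Chebyshev.T ℝ ((col c').2:ℤ)).eval (s r)|)
          ≤ ρ ^ (-(((col c').1:ℤ) + (col c').2)) * 1 := by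
            apply mul_le_mul_of_nonneg_left _ hz
            calc |(Polynomial.Chebyshev.T ℝ ((col c').1:ℤ)).eval (t r)| *
                  |(Polynomial.Chebyshev.T ℝ ((col c').2:ℤ)).eval (s r)|
                ≤ 1 * 1 := mul_le_mul c1 c2 (abs_nonneg _) zero_le_one
              _ = 1 := one_mul 1
        _ = ρ ^ (-(((col c').1:ℤ) + (col c').2)) := mul_one _
    have h2 : ρ ^ (-(((col c').1:ℤ) + (col c').2)) ≤ ρ ^ (-k) := by
      apply zpow_le_zpow_right₀ hρ.le
      have : (K:ℤ) ≤ ((col c').1:ℤ) + ((col c').2:ℤ) := by exact_mod_cast hm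
      omega
    calc X r c' ^ 2 = |X r c'|^2 := (sq_abs _).symm
      _ ≤ (ρ ^ (-(((col c').1:ℤ) + (col c').2)))^2 := pow_le_pow_left₀ (abs_nonneg _) habs 2
      _ ≤ (ρ^(-k))^2 := pow_le_pow_left₀ (zpow_pos hρ0 _).le h2 2
  have hFrob : ∑ r, ∑ c' ∈ Tᶜ, X r c' ^ 2 ≤ cb^2 := by
    have step1 : ∑ r : Fin n, ∑ c' ∈ (Tᶜ : Finset (Fin n)), X r c' ^ 2
        ≤ (n:ℝ) * ((n:ℝ) * (ρ^(-k))^2) := by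
      calc ∑ r : Fin n, ∑ c' ∈ (Tᶜ : Finset (Fin n)), X r c' ^ 2
          ≤ ∑ _r : Fin n, ∑ _c' ∈ (Tᶜ : Finset (Fin n)), (ρ^(-k))^2 := by
            apply Finset.sum_le_sum
            intro r _
            exact Finset.sum_le_sum (fun c' hc' => hentry r c' hc')
        _ = (n:ℝ) * (((Tᶜ : Finset (Fin n)).card : ℝ) * (ρ^(-k))^2) := by
            simp [Finset.sum_const, mul_assoc]
        _ ≤ (n:ℝ) * ((n:ℝ) * (ρ^(-k))^2) := by
            have hcard : ((Tᶜ : Finset (Fin n)).card : ℝ) ≤ (n:ℝ) := by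
              exact_mod_cast (by simpa using (Tᶜ : Finset (Fin n)).card_le_univ)
            have := (zpow_pos hρ0 (-k)).le
            apply mul_le_mul_of_nonneg_left _ (by positivity)
            apply mul_le_mul_of_nonneg_right hcard (by positivity)
    refine le_trans step1 ?_
    have hsq : Real.sqrt C₂ ^ 2 = C₂ := Real.sq_sqrt hC₂0
    have hnnz : (0:ℝ) ≤ (n:ℝ)*((n:ℝ)*(ρ^(-k))^2) := by positivity
    rw [hcb]
    calc (n:ℝ)*((n:ℝ)*(ρ^(-k))^2) ≤ 9/4*C₂*((n:ℝ)*((n:ℝ)*(ρ^(-k))^2)) := by nlinarith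
      _ = (3*Real.sqrt C₂/2*(n:ℝ)*ρ^(-k))^2 := by
          conv_lhs => rw [← hsq]
          ring
  exact spectral_key X hH S T cb (lt_of_le_of_lt hTcard (by omega)) hev hFrob
end
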